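/- arXiv:1707.05484 — 2 statements merged into one kernel-verified Lean document; each statement's English description precedes it below -/
import Mathlib

section
/- A collection S of dyadic intervals is η-sparse (i.e., one can choose pairwise disjoint measurable sets E_Q ⊆ Q with |E_Q| ≥ η|Q| for all Q ∈ S) if and only if it is (1/η)-Carleson (i.e., for every dyadic interval Q, the sum of |P| over P ∈ S with P ⊆ Q is at most (1/η)|Q|). -/
open MeasureTheory Set
open scoped ENNReal Classical

/-- A dyadic interval `[n 2^k, (n+1) 2^k)` in `ℝ`. -/
structure DyadicInterval where
  k : ℤ
  n : ℤ

def DyadicInterval.toSet (I : DyadicInterval) : Set ℝ :=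
  Set.Ico ((I.n : ℝ) * 2 ^ I.k) (((I.n : ℝ) + 1) * 2 ^ I.k)

namespace DyadicInterval

instance : Countable DyadicInterval := by
  have h : Function.Injective (fun I : DyadicInterval => (I.k, I.n)) := by
    intro ⟨a,b⟩ ⟨c,d⟩ h; simpa using h
  exact h.countable

lemma two_zpow_pos (k : ℤ) : (0:ℝ) < 2 ^ k := zpow_pos (by norm_num) k

lemma lt_right (I : DyadicInterval) : (I.n : ℝ) * 2 ^ I.k < ((I.n : ℝ) + 1) * 2 ^ I.k := by
  have := two_zpow_pos I.k; nlinarith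

lemma nonempty (I : DyadicInterval) : I.toSet.Nonempty :=
  ⟨(I.n : ℝ) * 2 ^ I.k, by simp [toSet, lt_right I]⟩

lemma measurableSet_toSet (I : DyadicInterval) : MeasurableSet I.toSet :=
  measurableSet_Ico

lemma volume_toSet (I : DyadicInterval) : volume I.toSet = ENNReal.ofReal (2 ^ I.k) := by
  rw [toSet, Real.volume_Ico]; ring_nf

lemma volume_toSet_lt_top (I : DyadicInterval) : volume I.toSet < ⊤ := by
  rw [volume_toSet]; exact ENNReal.ofReal_lt_top

lemma volume_toSet_ne_top (I : DyadicInterval) : volume I.toSet ≠ ⊤ := (volume_toSet_lt_top I).ne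

def left (I : DyadicInterval) : DyadicInterval := ⟨I.k - 1, 2 * I.n⟩
def right (I : DyadicInterval) : DyadicInterval := ⟨I.k - 1, 2 * I.n + 1⟩

lemma zpow_pred (k : ℤ) : (2:ℝ) ^ k = 2 ^ (k-1) * 2 := by
  rw [← zpow_add_one₀ (by norm_num : (2:ℝ) ≠ 0)]; ring_nf

lemma left_toSet (I : DyadicInterval) :
    I.left.toSet = Set.Ico ((I.n : ℝ) * 2 ^ I.k) ((I.n : ℝ) * 2 ^ I.k + 2 ^ (I.k - 1)) := by
  show Set.Ico (((2 * I.n : ℤ) : ℝ) * 2 ^ (I.k-1)) ((((2 * I.n : ℤ) : ℝ) + 1) * 2 ^ (I.k-1)) = _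
  rw [zpow_pred I.k]; push_cast; ring_nf

lemma right_toSet (I : DyadicInterval) :
    I.right.toSet = Set.Ico ((I.n : ℝ) * 2 ^ I.k + 2 ^ (I.k - 1)) (((I.n : ℝ) + 1) * 2 ^ I.k) := by
  show Set.Ico (((2 * I.n + 1 : ℤ) : ℝ) * 2 ^ (I.k-1)) ((((2 * I.n + 1 : ℤ) : ℝ) + 1) * 2 ^ (I.k-1)) = _
  rw [zpow_pred I.k]; push_cast; ring_nf

lemma union_children (I : DyadicInterval) : I.left.toSet ∪ I.right.toSet = I.toSet := by
  rw [left_toSet, right_toSet, toSet]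
  refine Ico_union_Ico_eq_Ico ?_ ?_
  · have := two_zpow_pos (I.k - 1); linarith
  · rw [zpow_pred I.k]; have := two_zpow_pos (I.k-1); nlinarith

lemma disjoint_children (I : DyadicInterval) : Disjoint I.left.toSet I.right.toSet := by
  rw [left_toSet, right_toSet]; exact Ico_disjoint_Ico_same

lemma left_subset (I : DyadicInterval) : I.left.toSet ⊆ I.toSet := by
  intro x hx; rw [← union_children I]; exact Or.inl hx
lemma right_subset (I : DyadicInterval) : I.right.toSet ⊆ I.toSet := by
  intro x hx; rw [← union_children I]; exact Or.inr hx

lemma k_le_of_subset {P R : DyadicInterval} (h : P.toSet ⊆ R.toSet) : P.k ≤ R.k := by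
  have hv := measure_mono (μ := volume) h
  rw [volume_toSet, volume_toSet] at hv
  have h2 : (2:ℝ) ^ P.k ≤ 2 ^ R.k := by
    have := (ENNReal.ofReal_le_ofReal_iff (le_of_lt (two_zpow_pos R.k))).mp hv
    exact this
  exact le_of_not_gt fun hc => absurd h2 (not_le.mpr (zpow_lt_zpow_right₀ (by norm_num) hc))

/-- If the scale of `P` is at most that of `R` and they intersect, then `P ⊆ R`. -/
lemma subset_or_disjoint_of_k_le {P R : DyadicInterval} (hk : P.k ≤ R.k) :
    P.toSet ⊆ R.toSet ∨ Disjoint P.toSet R.toSet := by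
  by_cases hd : Disjoint P.toSet R.toSet
  · exact Or.inr hd
  left
  rw [Set.not_disjoint_iff] at hd
  obtain ⟨x, hxP, hxR⟩ := hd
  rw [toSet, mem_Ico] at hxP hxR
  set M : ℤ := 2 ^ (R.k - P.k).toNat with hM
  have hMR : (2:ℝ) ^ R.k = (M : ℝ) * 2 ^ P.k := by
    have : ((R.k - P.k).toNat : ℤ) = R.k - P.k := Int.toNat_of_nonneg (by omega)
    rw [hM]
    push_cast
    rw [← zpow_natCast (2:ℝ) (R.k - P.k).toNat, this, ← zpow_add₀ (by norm_num : (2:ℝ) ≠ 0)]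
    ring_nf
  have hpow := two_zpow_pos P.k
  -- real inequalities
  have h1 : (R.n : ℝ) * (M * 2 ^ P.k) < ((P.n : ℝ) + 1) * 2 ^ P.k := by
    rw [← hMR]; exact lt_of_le_of_lt hxR.1 hxP.2
  have h2 : (P.n : ℝ) * 2 ^ P.k < ((R.n : ℝ) + 1) * (M * 2 ^ P.k) := by
    rw [← hMR]; exact lt_of_le_of_lt hxP.1 hxR.2
  have h1' : (R.n : ℝ) * M < (P.n : ℝ) + 1 := by
    have := lt_of_mul_lt_mul_right (by linarith [h1] : ((R.n:ℝ) * M) * 2 ^ P.k < ((P.n:ℝ)+1) * 2 ^ P.k) hpow.le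
    exact this
  have h2' : (P.n : ℝ) < ((R.n : ℝ) + 1) * M := by
    have := lt_of_mul_lt_mul_right (by linarith [h2] : ((P.n:ℝ)) * 2 ^ P.k < (((R.n:ℝ)+1) * M) * 2 ^ P.k) hpow.le
    exact this
  have hi1 : R.n * M ≤ P.n := by
    have : (↑(R.n * M) : ℝ) < ((P.n + 1 : ℤ) : ℝ) := by push_cast; linarith
    have h' : R.n * M < P.n + 1 := by exact_mod_cast this
    omega
  have hi2 : P.n + 1 ≤ (R.n + 1) * M := by
    have : ((P.n : ℤ) : ℝ) < (((R.n + 1) * M : ℤ) : ℝ) := by push_cast; linarith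
    have h' : P.n < (R.n + 1) * M := by exact_mod_cast this
    omega
  rw [toSet, toSet]
  rw [Ico_subset_Ico_iff (lt_right P)]
  constructor
  · rw [hMR]
    calc (R.n : ℝ) * ((M:ℝ) * 2 ^ P.k) = ((R.n * M : ℤ) : ℝ) * 2 ^ P.k := by push_cast; ring
    _ ≤ (P.n : ℝ) * 2 ^ P.k := by
        have : ((R.n * M : ℤ) : ℝ) ≤ (P.n : ℝ) := Int.cast_le.mpr hi1
        nlinarith
  · rw [hMR]
    calc ((P.n : ℝ) + 1) * 2 ^ P.k = ((P.n + 1 : ℤ) : ℝ) * 2 ^ P.k := by push_cast; ring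
    _ ≤ (((R.n + 1) * M : ℤ) : ℝ) * 2 ^ P.k := by
        have : ((P.n + 1 : ℤ) : ℝ) ≤ (((R.n + 1) * M : ℤ) : ℝ) := Int.cast_le.mpr hi2
        nlinarith
    _ = ((R.n : ℝ) + 1) * ((M:ℝ) * 2 ^ P.k) := by push_cast; ring

lemma eq_of_subset_of_k_eq {P R : DyadicInterval} (h : P.toSet ⊆ R.toSet) (hk : P.k = R.k) :
    P = R := by
  rw [toSet, toSet, Ico_subset_Ico_iff (lt_right P)] at h
  obtain ⟨h1, h2⟩ := h
  rw [hk] at h1 h2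
  have hpow := two_zpow_pos R.k
  have hn1 : (R.n : ℝ) ≤ P.n := le_of_mul_le_mul_right (by linarith) hpow
  have hn2 : (P.n : ℝ) + 1 ≤ (R.n : ℝ) + 1 := by
    have : ((P.n:ℝ)+1) ≤ ((R.n:ℝ)+1) := le_of_mul_le_mul_right (by linarith) hpow
    exact this
  have : P.n = R.n := by
    have a : R.n ≤ P.n := by exact_mod_cast hn1
    have b : P.n ≤ R.n := by exact_mod_cast (by linarith : (P.n : ℝ) ≤ (R.n : ℝ))
    omega
  cases P; cases R; simp_all

/-- A strict dyadic subinterval is inside one of the two children.  -/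
lemma subset_child {P R : DyadicInterval} (h : P.toSet ⊆ R.toSet) (hk : P.k < R.k) :
    P.toSet ⊆ R.left.toSet ∨ P.toSet ⊆ R.right.toSet := by
  have hkl : P.k ≤ R.left.k := by show P.k ≤ R.k - 1; omega
  rcases subset_or_disjoint_of_k_le hkl with hsub | hdis
  · exact Or.inl hsub
  · right
    intro x hx
    have hxR := h hx
    rw [← union_children R] at hxR
    rcases hxR with hxl | hxr
    · exact absurd hxl (disjoint_left.mp hdis hx)
    · exact hxr

end DyadicInterval




/-- `S` is an `η`-sparse collection of dyadic intervals: one can choose pairwise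
disjoint measurable sets `E Q ⊆ Q` with `|E Q| ≥ η |Q|` for all `Q ∈ S`. -/
def IsSparse (η : ℝ) (S : Set DyadicInterval) : Prop :=
  ∃ E : DyadicInterval → Set ℝ,
    (∀ Q ∈ S, MeasurableSet (E Q) ∧ E Q ⊆ Q.toSet ∧
      ENNReal.ofReal η * volume Q.toSet ≤ volume (E Q)) ∧
    S.Pairwise fun Q Q' => Disjoint (E Q) (E Q')

/-- `S` is a `Λ`-Carleson collection of dyadic intervals: for every dyadic `Q`,
the sum of `|P|` over `P ∈ S` with `P ⊆ Q` is at most `Λ |Q|`. -/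
def IsCarleson (Λ : ℝ) (S : Set DyadicInterval) : Prop :=
  ∀ Q : DyadicInterval,
    (∑' P : {P : DyadicInterval // P ∈ S ∧ P.toSet ⊆ Q.toSet}, volume P.1.toSet)
      ≤ ENNReal.ofReal Λ * volume Q.toSet

namespace SparseAux

open DyadicInterval




lemma isLowerSet_cases {L : Set ℝ} (h : IsLowerSet L) :
    L = ∅ ∨ L = univ ∨ (∃ τ, L = Iio τ) ∨ (∃ τ, L = Iic τ) := by
  by_cases hne : L = ∅
  · exact Or.inl hne
  by_cases hb : BddAbove L
  · have hLne : L.Nonempty := nonempty_iff_ne_empty.mpr hne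
    set τ := sSup L with hτ
    have hsub : L ⊆ Iic τ := fun y hy => le_csSup hb hy
    have hsup : Iio τ ⊆ L := by
      intro y hy
      obtain ⟨l, hl, hyl⟩ := exists_lt_of_lt_csSup hLne hy
      exact h (le_of_lt hyl) hl
    by_cases hmem : τ ∈ L
    · refine Or.inr (Or.inr (Or.inr ⟨τ, ?_⟩))
      apply Subset.antisymm hsub
      intro y hy; exact h hy hmem
    · refine Or.inr (Or.inr (Or.inl ⟨τ, ?_⟩))
      apply Subset.antisymm _ hsup
      intro y hy
      rcases lt_or_eq_of_le (mem_Iic.mp (hsub hy)) with h' | h'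
      · exact h'
      · exact absurd (h' ▸ hy) hmem
  · refine Or.inr (Or.inl ?_)
    apply eq_univ_of_forall
    intro y
    rw [not_bddAbove_iff] at hb
    obtain ⟨l, hl, hyl⟩ := hb y
    exact h (le_of_lt hyl) hl

noncomputable def lm (A : Set ℝ) (c : ℝ≥0∞) : Set ℝ :=
  A ∩ {y | volume (A ∩ Iic y) < c}

lemma lm_subset (A : Set ℝ) (c : ℝ≥0∞) : lm A c ⊆ A := inter_subset_left

lemma isLowerSet_lm (A : Set ℝ) (c : ℝ≥0∞) : IsLowerSet {y | volume (A ∩ Iic y) < c} := by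
  intro y y' hle hy
  exact lt_of_le_of_lt (measure_mono (inter_subset_inter_right _ (Iic_subset_Iic.mpr hle))) hy

lemma measurableSet_lm {A : Set ℝ} (hA : MeasurableSet A) (c : ℝ≥0∞) :
    MeasurableSet (lm A c) := by
  rcases isLowerSet_cases (isLowerSet_lm A c) with h | h | ⟨τ, h⟩ | ⟨τ, h⟩ <;>
    · rw [lm, h]; first
      | exact hA.inter MeasurableSet.empty
      | exact hA.inter MeasurableSet.univ
      | exact hA.inter measurableSet_Iio
      | exact hA.inter measurableSet_Iic

lemma iUnion_Iic_nat : (⋃ n : ℕ, Iic ((n:ℝ))) = univ := by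
  apply eq_univ_of_forall; intro x
  obtain ⟨n, hn⟩ := exists_nat_ge x
  exact mem_iUnion.mpr ⟨n, hn⟩

lemma directed_inter_Iic (A : Set ℝ) (g : ℕ → ℝ) (hg : Monotone g) :
    Directed (· ⊆ ·) (fun n => A ∩ Iic (g n)) := by
  intro m n
  exact ⟨max m n, inter_subset_inter_right _ (Iic_subset_Iic.mpr (hg (le_max_left m n))),
    inter_subset_inter_right _ (Iic_subset_Iic.mpr (hg (le_max_right m n)))⟩

/-- The "leftmost part" has measure at most `c`. -/
lemma volume_lm_le (A : Set ℝ) (c : ℝ≥0∞) : volume (lm A c) ≤ c := by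
  rcases isLowerSet_cases (isLowerSet_lm A c) with h | h | ⟨τ, h⟩ | ⟨τ, h⟩
  · rw [lm, h]; simp
  · rw [lm, h, inter_univ]
    have hA : A = ⋃ n : ℕ, A ∩ Iic (n : ℝ) := by
      rw [← inter_iUnion, iUnion_Iic_nat, inter_univ]
    rw [hA, Directed.measure_iUnion (directed_inter_Iic A _ (fun m n hmn => by exact_mod_cast hmn))]
    apply iSup_le
    intro n
    have hmem : ((n:ℕ):ℝ) ∈ {y | volume (A ∩ Iic y) < c} := by rw [h]; exact mem_univ _
    exact le_of_lt hmem
  · rw [lm, h]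
    have hA : A ∩ Iio τ = ⋃ n : ℕ, A ∩ Iic (τ - 1/(n+1)) := by
      apply Subset.antisymm
      · intro x hx
        obtain ⟨n, hn⟩ := exists_nat_one_div_lt (show (0:ℝ) < τ - x from sub_pos.mpr hx.2)
        exact mem_iUnion.mpr ⟨n, hx.1, mem_Iic.mpr (by linarith)⟩
      · refine iUnion_subset fun n => inter_subset_inter_right _ ?_
        intro x hx
        have h1 : (0:ℝ) < 1/((n:ℝ)+1) := by positivity
        have hx' : x ≤ τ - 1/((n:ℝ)+1) := mem_Iic.mp hx
        exact mem_Iio.mpr (by linarith)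
    rw [hA, Directed.measure_iUnion (directed_inter_Iic A _ ?mono)]
    case mono =>
      intro m n hmn
      have hmn' : (m:ℝ) ≤ (n:ℝ) := by exact_mod_cast hmn
      have : (1:ℝ)/((n:ℝ)+1) ≤ 1/((m:ℝ)+1) :=
        one_div_le_one_div_of_le (by positivity) (by linarith)
      linarith
    apply iSup_le
    intro n
    have h1 : (0:ℝ) < 1/((n:ℝ)+1) := by positivity
    have hmem : τ - 1/((n:ℝ)+1) ∈ {y | volume (A ∩ Iic y) < c} := by
      rw [h]; exact mem_Iio.mpr (by linarith)
    exact le_of_lt hmem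
  · rw [lm, h]
    have hmem : τ ∈ {y | volume (A ∩ Iic y) < c} := by rw [h]; exact mem_Iic.mpr le_rfl
    exact le_of_lt hmem







/-- Lower bound for the measure of the leftmost part. -/
lemma le_volume_lm {A : Set ℝ} (hA : MeasurableSet A) (hfin : volume A ≠ ⊤) (c : ℝ≥0∞) :
    min c (volume A) ≤ volume (lm A c) := by
  rcases isLowerSet_cases (isLowerSet_lm A c) with h | h | ⟨τ, h⟩ | ⟨τ, h⟩
  · -- c must be 0
    have hnot : ∀ y : ℝ, c ≤ volume (A ∩ Iic y) := by
      intro y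
      by_contra hc
      exact absurd (h ▸ (not_le.mp hc) : y ∈ (∅ : Set ℝ)) (notMem_empty y)
    have hanti : Antitone (fun n : ℕ => A ∩ Iic (-(n:ℝ))) := by
      intro m n hmn
      exact inter_subset_inter_right _ (Iic_subset_Iic.mpr (by exact_mod_cast neg_le_neg (by exact_mod_cast hmn : (m:ℝ) ≤ n)))
    have hint : (⋂ n : ℕ, A ∩ Iic (-(n:ℝ))) = ∅ := by
      apply eq_empty_of_forall_notMem
      intro x hx
      obtain ⟨n, hn⟩ := exists_nat_gt (-x)
      have := (mem_iInter.mp hx n).2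
      rw [mem_Iic] at this
      linarith
    have h0 : (⨅ n : ℕ, volume (A ∩ Iic (-(n:ℝ)))) = 0 := by
      rw [← Antitone.measure_iInter hanti
        (fun n => (hA.inter measurableSet_Iic).nullMeasurableSet)
        ⟨0, ne_top_of_le_ne_top hfin (measure_mono inter_subset_left)⟩, hint, measure_empty]
    have : c ≤ 0 := by
      have hc := le_iInf (fun n : ℕ => hnot (-(n:ℝ)))
      rw [h0] at hc
      exact hc
    calc min c (volume A) ≤ c := min_le_left _ _
    _ ≤ 0 := this
    _ ≤ _ := zero_le
  · rw [lm, h, inter_univ]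
    exact min_le_right _ _
  · -- L = Iio τ : volume (lm) = F τ ≥ c
    rw [lm, h]
    have hτ : c ≤ volume (A ∩ Iic τ) := by
      by_contra hc
      have : τ ∈ Iio τ := h ▸ (not_le.mp hc)
      exact lt_irrefl τ this
    refine le_trans (min_le_left _ _) (le_trans hτ ?_)
    calc volume (A ∩ Iic τ) ≤ volume ((A ∩ Iio τ) ∪ (A ∩ {τ})) := by
          apply measure_mono
          intro x hx
          rcases lt_or_eq_of_le (mem_Iic.mp hx.2) with h' | h'
          · exact Or.inl ⟨hx.1, h'⟩
          · exact Or.inr ⟨hx.1, h'⟩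
    _ ≤ volume (A ∩ Iio τ) + volume (A ∩ {τ}) := measure_union_le _ _
    _ ≤ volume (A ∩ Iio τ) + volume ({τ} : Set ℝ) := by
          gcongr; exact inter_subset_right
    _ = volume (A ∩ Iio τ) := by rw [Real.volume_singleton, add_zero]
  · -- L = Iic τ : volume (lm) = F τ ≥ c
    rw [lm, h]
    have hanti : Antitone (fun n : ℕ => A ∩ Iic (τ + 1/((n:ℝ)+1))) := by
      intro m n hmn
      refine inter_subset_inter_right _ (Iic_subset_Iic.mpr ?_)
      have hmn' : (m:ℝ) ≤ (n:ℝ) := by exact_mod_cast hmn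
      have : (1:ℝ)/((n:ℝ)+1) ≤ 1/((m:ℝ)+1) :=
        one_div_le_one_div_of_le (by positivity) (by linarith)
      linarith
    have hint : (⋂ n : ℕ, A ∩ Iic (τ + 1/((n:ℝ)+1))) = A ∩ Iic τ := by
      apply Subset.antisymm
      · intro x hx
        refine ⟨(mem_iInter.mp hx 0).1, ?_⟩
        rw [mem_Iic]
        by_contra hc
        push_neg at hc
        obtain ⟨n, hn⟩ := exists_nat_one_div_lt (show (0:ℝ) < x - τ from by linarith)
        have := mem_Iic.mp (mem_iInter.mp hx n).2
        linarith
      · intro x hx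
        refine mem_iInter.mpr fun n => ⟨hx.1, ?_⟩
        have h1 : (0:ℝ) < 1/((n:ℝ)+1) := by positivity
        exact mem_Iic.mpr (by linarith [mem_Iic.mp hx.2])
    have heq : volume (A ∩ Iic τ) = ⨅ n : ℕ, volume (A ∩ Iic (τ + 1/((n:ℝ)+1))) := by
      rw [← hint, Antitone.measure_iInter hanti
        (fun n => (hA.inter measurableSet_Iic).nullMeasurableSet)
        ⟨0, ne_top_of_le_ne_top hfin (measure_mono inter_subset_left)⟩]
    have hge : c ≤ volume (A ∩ Iic τ) := by
      rw [heq]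
      refine le_iInf fun n => ?_
      by_contra hc
      have h1 : (0:ℝ) < 1/((n:ℝ)+1) := by positivity
      have : τ + 1/((n:ℝ)+1) ∈ Iic τ := h ▸ (not_le.mp hc)
      rw [mem_Iic] at this
      linarith
    exact le_trans (min_le_left _ _) hge

/-- Monotonicity of claimed regions. -/
lemma union_lm_mono {R X X' : Set ℝ} (h : X ⊆ X') (c : ℝ≥0∞) :
    X ∪ lm (R \ X) c ⊆ X' ∪ lm (R \ X') c := by
  intro y hy
  rcases hy with hy | hy
  · exact Or.inl (h hy)
  · by_cases hy' : y ∈ X'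
    · exact Or.inl hy'
    · refine Or.inr ⟨⟨hy.1.1, hy'⟩, ?_⟩
      exact lt_of_le_of_lt
        (measure_mono (inter_subset_inter_left _ (diff_subset_diff_right h))) hy.2

/-- Continuity of the leftmost selection along increasing unions. -/
lemma lm_iUnion_subset {R : Set ℝ} (hR : MeasurableSet R) (hfin : volume R ≠ ⊤)
    {V : ℕ → Set ℝ} (hV : ∀ n, MeasurableSet (V n)) (hmono : Monotone V) (c : ℝ≥0∞) :
    lm (R \ ⋃ n, V n) c ⊆ ⋃ n, lm (R \ V n) c := by
  intro y hy
  have hmem : ∀ n, y ∈ R \ V n := fun n =>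
    diff_subset_diff_right (subset_iUnion V n) hy.1
  have hanti : Antitone (fun n => (R \ V n) ∩ Iic y) := fun m n hmn =>
    inter_subset_inter_left _ (diff_subset_diff_right (hmono hmn))
  have hint : (⋂ n, (R \ V n) ∩ Iic y) = (R \ ⋃ n, V n) ∩ Iic y := by
    rw [← iInter_inter, ← diff_iUnion]
  have heq : volume ((R \ ⋃ n, V n) ∩ Iic y) = ⨅ n, volume ((R \ V n) ∩ Iic y) := by
    rw [← hint, Antitone.measure_iInter hanti
      (fun n => ((hR.diff (hV n)).inter measurableSet_Iic).nullMeasurableSet)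
      ⟨0, ne_top_of_le_ne_top hfin (measure_mono (inter_subset_left.trans diff_subset))⟩]
  have hlt : (⨅ n, volume ((R \ V n) ∩ Iic y)) < c := heq ▸ hy.2
  obtain ⟨n, hn⟩ := iInf_lt_iff.mp hlt
  exact mem_iUnion.mpr ⟨n, hmem n, hn⟩



noncomputable def U (eta : ℝ) (S : Set DyadicInterval) : ℕ → DyadicInterval → Set ℝ
  | 0, _ => ∅
  | n+1, R =>
      (U eta S n R.left ∪ U eta S n R.right) ∪
        (if R ∈ S then
          lm (R.toSet \ (U eta S n R.left ∪ U eta S n R.right))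
            (ENNReal.ofReal eta * volume R.toSet)
        else ∅)

noncomputable def UL (eta : ℝ) (S : Set DyadicInterval) (R : DyadicInterval) : Set ℝ :=
  ⋃ n, U eta S n R

noncomputable def sigma (S : Set DyadicInterval) (R : DyadicInterval) : ℝ≥0∞ :=
  ∑' P : {P : DyadicInterval // P ∈ S ∧ P.toSet ⊆ R.toSet}, volume P.1.toSet

variable {eta : ℝ} {S : Set DyadicInterval}

lemma U_subset (eta S) : ∀ (n : ℕ) (R : DyadicInterval), U eta S n R ⊆ R.toSet := by
  intro n
  induction n with
  | zero => intro R; simp [U]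
  | succ n ih =>
      intro R
      show (U eta S n R.left ∪ U eta S n R.right) ∪ _ ⊆ R.toSet
      apply union_subset
      · exact union_subset ((ih R.left).trans (left_subset R)) ((ih R.right).trans (right_subset R))
      · split
        · exact (lm_subset _ _).trans (diff_subset)
        · exact empty_subset _

lemma measurable_U (eta S) : ∀ (n : ℕ) (R : DyadicInterval), MeasurableSet (U eta S n R) := by
  intro n
  induction n with
  | zero => intro R; simp [U]
  | succ n ih =>
      intro R
      apply MeasurableSet.union ((ih R.left).union (ih R.right))
      split
      · exact measurableSet_lm ((measurableSet_toSet R).diff ((ih R.left).union (ih R.right))) _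
      · exact MeasurableSet.empty

lemma U_mono_succ (eta S) : ∀ (n : ℕ) (R : DyadicInterval), U eta S n R ⊆ U eta S (n+1) R := by
  intro n
  induction n with
  | zero => intro R; simp [U]
  | succ n ih =>
      intro R
      show (U eta S n R.left ∪ U eta S n R.right) ∪ _ ⊆
        (U eta S (n+1) R.left ∪ U eta S (n+1) R.right) ∪ _
      by_cases hR : R ∈ S
      · rw [if_pos hR, if_pos hR]
        exact union_lm_mono (union_subset_union (ih R.left) (ih R.right)) _
      · rw [if_neg hR, if_neg hR, union_empty, union_empty]
        exact union_subset_union (ih R.left) (ih R.right)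

lemma U_mono (eta S) (R : DyadicInterval) : Monotone (fun n => U eta S n R) :=
  monotone_nat_of_le_succ (fun n => U_mono_succ eta S n R)

lemma UL_subset (eta S) (R : DyadicInterval) : UL eta S R ⊆ R.toSet :=
  iUnion_subset (fun n => U_subset eta S n R)

lemma measurable_UL (eta S) (R : DyadicInterval) : MeasurableSet (UL eta S R) :=
  MeasurableSet.iUnion (fun n => measurable_U eta S n R)

lemma child_U_subset_left (eta S) (n : ℕ) (R : DyadicInterval) :
    U eta S n R.left ⊆ U eta S (n+1) R :=
  subset_union_left.trans subset_union_left

lemma child_U_subset_right (eta S) (n : ℕ) (R : DyadicInterval) :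
    U eta S n R.right ⊆ U eta S (n+1) R :=
  subset_union_right.trans subset_union_left

lemma UL_child_left (eta S) (R : DyadicInterval) : UL eta S R.left ⊆ UL eta S R := by
  rw [UL, UL]
  exact iUnion_subset fun n => (child_U_subset_left eta S n R).trans
    (subset_iUnion (fun m => U eta S m R) (n+1))

lemma UL_child_right (eta S) (R : DyadicInterval) : UL eta S R.right ⊆ UL eta S R := by
  rw [UL, UL]
  exact iUnion_subset fun n => (child_U_subset_right eta S n R).trans
    (subset_iUnion (fun m => U eta S m R) (n+1))

lemma UL_mono (eta S) : ∀ (d : ℕ) (P R : DyadicInterval), P.toSet ⊆ R.toSet →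
    (R.k - P.k).toNat = d → UL eta S P ⊆ UL eta S R := by
  intro d
  induction d with
  | zero =>
      intro P R hsub hd
      have hk := k_le_of_subset hsub
      have : P.k = R.k := by omega
      rw [eq_of_subset_of_k_eq hsub this]
  | succ d ih =>
      intro P R hsub hd
      have hk := k_le_of_subset hsub
      have hklt : P.k < R.k := by omega
      rcases subset_child hsub hklt with h | h
      · exact (ih P R.left h (by show (R.k - 1 - P.k).toNat = d; omega)).trans (UL_child_left eta S R)
      · exact (ih P R.right h (by show (R.k - 1 - P.k).toNat = d; omega)).trans (UL_child_right eta S R)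

lemma UL_mono' (eta S) {P R : DyadicInterval} (hsub : P.toSet ⊆ R.toSet) :
    UL eta S P ⊆ UL eta S R :=
  UL_mono eta S _ P R hsub rfl

lemma sigma_children (S : Set DyadicInterval) (R : DyadicInterval) :
    sigma S R.left + sigma S R.right + (if R ∈ S then volume R.toSet else 0) ≤ sigma S R := by
  have hrepr : ∀ R' : DyadicInterval, sigma S R' =
      ∑' P : DyadicInterval,
        Set.indicator {P : DyadicInterval | P ∈ S ∧ P.toSet ⊆ R'.toSet}
          (fun P => volume P.toSet) P := by
    intro R'
    exact tsum_subtype {P : DyadicInterval | P ∈ S ∧ P.toSet ⊆ R'.toSet} (fun P => volume P.toSet)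
  have hsing : (if R ∈ S then volume R.toSet else 0) =
      ∑' P : DyadicInterval, (if P = R then (if R ∈ S then volume R.toSet else 0) else 0) :=
    (tsum_ite_eq R (fun _ => if R ∈ S then volume R.toSet else 0)).symm
  rw [hrepr, hrepr, hrepr, hsing, ← ENNReal.tsum_add, ← ENNReal.tsum_add]
  apply ENNReal.tsum_le_tsum
  intro P
  by_cases h3 : P = R
  · subst h3
    have hnl : ¬ P.toSet ⊆ P.left.toSet := by
      intro hc
      obtain ⟨x, hx⟩ := nonempty P.right
      exact (disjoint_right.mp (disjoint_children P) hx) (hc (right_subset P hx))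
    have hnr : ¬ P.toSet ⊆ P.right.toSet := by
      intro hc
      obtain ⟨x, hx⟩ := nonempty P.left
      exact (disjoint_left.mp (disjoint_children P) hx) (hc (left_subset P hx))
    rw [Set.indicator_of_notMem (fun hc => hnl hc.2), Set.indicator_of_notMem (fun hc => hnr hc.2),
      if_pos rfl, zero_add, zero_add]
    by_cases hR : P ∈ S
    · rw [if_pos hR, Set.indicator_of_mem
        (show P ∈ {P' : DyadicInterval | P' ∈ S ∧ P'.toSet ⊆ P.toSet} from ⟨hR, subset_rfl⟩)]
    · rw [if_neg hR]; exact zero_le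
  · rw [if_neg h3, add_zero]
    by_cases h1 : P ∈ {P : DyadicInterval | P ∈ S ∧ P.toSet ⊆ R.left.toSet}
    · have h2 : P ∉ {P : DyadicInterval | P ∈ S ∧ P.toSet ⊆ R.right.toSet} := by
        intro hc
        obtain ⟨x, hx⟩ := nonempty P
        exact (disjoint_left.mp (disjoint_children R) (h1.2 hx)) (hc.2 hx)
      rw [Set.indicator_of_mem h1, Set.indicator_of_notMem h2, add_zero,
        Set.indicator_of_mem
          (show P ∈ {P : DyadicInterval | P ∈ S ∧ P.toSet ⊆ R.toSet} from
            ⟨h1.1, h1.2.trans (left_subset R)⟩)]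
    · rw [Set.indicator_of_notMem h1, zero_add]
      by_cases h2 : P ∈ {P : DyadicInterval | P ∈ S ∧ P.toSet ⊆ R.right.toSet}
      · rw [Set.indicator_of_mem h2, Set.indicator_of_mem
            (show P ∈ {P : DyadicInterval | P ∈ S ∧ P.toSet ⊆ R.toSet} from
              ⟨h2.1, h2.2.trans (right_subset R)⟩)]
      · rw [Set.indicator_of_notMem h2]; exact zero_le

lemma vol_U_le (eta S) : ∀ (n : ℕ) (R : DyadicInterval),
    volume (U eta S n R) ≤ ENNReal.ofReal eta * sigma S R := by
  intro n
  induction n with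
  | zero => intro R; simp [U]
  | succ n ih =>
      intro R
      have step : volume (U eta S (n+1) R) ≤
          volume (U eta S n R.left) + volume (U eta S n R.right) +
            (if R ∈ S then ENNReal.ofReal eta * volume R.toSet else 0) := by
        refine le_trans (measure_union_le _ _) ?_
        gcongr
        · exact measure_union_le _ _
        · split
          · exact volume_lm_le _ _
          · simp
      refine step.trans ?_
      have : ENNReal.ofReal eta * sigma S R.left + ENNReal.ofReal eta * sigma S R.right +
          (if R ∈ S then ENNReal.ofReal eta * volume R.toSet else 0) =
          ENNReal.ofReal eta * (sigma S R.left + sigma S R.right +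
            (if R ∈ S then volume R.toSet else 0)) := by
        rw [mul_add, mul_add, mul_ite, mul_zero]
      calc volume (U eta S n R.left) + volume (U eta S n R.right) +
            (if R ∈ S then ENNReal.ofReal eta * volume R.toSet else 0)
          ≤ ENNReal.ofReal eta * sigma S R.left + ENNReal.ofReal eta * sigma S R.right +
            (if R ∈ S then ENNReal.ofReal eta * volume R.toSet else 0) := by
            gcongr
            · exact ih R.left
            · exact ih R.right
      _ = ENNReal.ofReal eta * (sigma S R.left + sigma S R.right +
            (if R ∈ S then volume R.toSet else 0)) := this
      _ ≤ ENNReal.ofReal eta * sigma S R := mul_le_mul_right (sigma_children S R) _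

lemma vol_UL_le (eta S) (R : DyadicInterval) :
    volume (UL eta S R) ≤ ENNReal.ofReal eta * sigma S R := by
  rw [UL, Directed.measure_iUnion ((U_mono eta S R).directed_le)]
  exact iSup_le fun n => vol_U_le eta S n R

lemma isSparse_of_isCarleson (hη₀ : 0 < eta) (hC : IsCarleson (1/eta) S) :
    IsSparse eta S := by
  set c : DyadicInterval → ℝ≥0∞ := fun Q => ENNReal.ofReal eta * volume Q.toSet with hc
  set V : DyadicInterval → Set ℝ := fun Q => UL eta S Q.left ∪ UL eta S Q.right with hV
  set E : DyadicInterval → Set ℝ := fun Q => lm (Q.toSet \ V Q) (c Q) with hE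
  have hσ : ∀ Q, sigma S Q ≤ ENNReal.ofReal (1/eta) * volume Q.toSet := fun Q => hC Q
  have hV_meas : ∀ Q, MeasurableSet (V Q) :=
    fun Q => (measurable_UL eta S Q.left).union (measurable_UL eta S Q.right)
  have hV_sub : ∀ Q, V Q ⊆ Q.toSet := fun Q =>
    union_subset ((UL_subset eta S Q.left).trans (left_subset Q))
      ((UL_subset eta S Q.right).trans (right_subset Q))
  have hV_fin : ∀ Q, volume (V Q) ≠ ⊤ :=
    fun Q => ne_top_of_le_ne_top (volume_toSet_ne_top Q) (measure_mono (hV_sub Q))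
  have hA_meas : ∀ Q, MeasurableSet (Q.toSet \ V Q) :=
    fun Q => (measurableSet_toSet Q).diff (hV_meas Q)
  have hA_fin : ∀ Q, volume (Q.toSet \ V Q) ≠ ⊤ :=
    fun Q => ne_top_of_le_ne_top (volume_toSet_ne_top Q) (measure_mono diff_subset)
  have hkey : ∀ Q ∈ S, c Q ≤ volume (Q.toSet \ V Q) := by
    intro Q hQ
    have h1 : volume (V Q) + c Q ≤ volume Q.toSet := by
      have h2 : volume (V Q) ≤
          ENNReal.ofReal eta * sigma S Q.left + ENNReal.ofReal eta * sigma S Q.right := by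
        refine (measure_union_le _ _).trans ?_
        gcongr
        · exact vol_UL_le eta S Q.left
        · exact vol_UL_le eta S Q.right
      calc volume (V Q) + c Q
          ≤ (ENNReal.ofReal eta * sigma S Q.left + ENNReal.ofReal eta * sigma S Q.right)
            + ENNReal.ofReal eta * volume Q.toSet := by gcongr
        _ = ENNReal.ofReal eta * (sigma S Q.left + sigma S Q.right + volume Q.toSet) := by
            rw [mul_add, mul_add]
        _ ≤ ENNReal.ofReal eta * sigma S Q := by
            apply mul_le_mul_right
            have := sigma_children S Q
            rw [if_pos hQ] at this
            exact this
        _ ≤ ENNReal.ofReal eta * (ENNReal.ofReal (1/eta) * volume Q.toSet) :=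
            mul_le_mul_right (hσ Q) _
        _ = volume Q.toSet := by
            rw [← mul_assoc, ← ENNReal.ofReal_mul hη₀.le, mul_one_div_cancel hη₀.ne',
              ENNReal.ofReal_one, one_mul]
    have h3 : volume (Q.toSet \ V Q) = volume Q.toSet - volume (V Q) :=
      measure_diff (hV_sub Q) (hV_meas Q).nullMeasurableSet (hV_fin Q)
    rw [h3]
    exact ENNReal.le_sub_of_add_le_left (hV_fin Q) h1
  have hEvol : ∀ Q ∈ S, c Q ≤ volume (E Q) := by
    intro Q hQ
    have := le_volume_lm (hA_meas Q) (hA_fin Q) (c Q)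
    rwa [min_eq_left (hkey Q hQ)] at this
  have hEU : ∀ Q ∈ S, E Q ⊆ UL eta S Q := by
    intro Q hQ
    have hrw : V Q = ⋃ n, (U eta S n Q.left ∪ U eta S n Q.right) := by
      rw [hV]
      exact (iUnion_union_distrib _ _).symm
    have h5 := lm_iUnion_subset (measurableSet_toSet Q) (volume_toSet_ne_top Q)
      (fun n => (measurable_U eta S n Q.left).union (measurable_U eta S n Q.right))
      (fun m n hmn => union_subset_union (U_mono eta S Q.left hmn) (U_mono eta S Q.right hmn))
      (c Q)
    refine subset_trans ?_ (subset_trans h5 ?_)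
    · show lm (Q.toSet \ V Q) (c Q) ⊆ _
      rw [hrw]
    · refine iUnion_subset fun n => ?_
      have h6 : lm (Q.toSet \ (U eta S n Q.left ∪ U eta S n Q.right)) (c Q) ⊆
          U eta S (n+1) Q := by
        show _ ⊆ (U eta S n Q.left ∪ U eta S n Q.right) ∪ _
        rw [if_pos hQ]
        exact subset_union_right
      exact h6.trans (subset_iUnion (fun m => U eta S m Q) (n+1))
  have hdisj_aux : ∀ Q ∈ S, ∀ Q' ∈ S, Q'.k ≤ Q.k → Q ≠ Q' → Disjoint (E Q) (E Q') := by
    intro Q hQ Q' hQ' hk hne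
    rcases subset_or_disjoint_of_k_le hk with hsub | hdis
    · have hklt : Q'.k < Q.k := by
        rcases lt_or_eq_of_le hk with h | h
        · exact h
        · exact absurd (eq_of_subset_of_k_eq hsub h) (fun h' => hne h'.symm)
      have hsubV : E Q' ⊆ V Q := by
        rcases subset_child hsub hklt with h | h
        · exact (hEU Q' hQ').trans ((UL_mono' eta S h).trans subset_union_left)
        · exact (hEU Q' hQ').trans ((UL_mono' eta S h).trans subset_union_right)
      refine disjoint_left.mpr fun x hx hx' => ?_
      exact hx.1.2 (hsubV hx')
    · exact hdis.symm.mono ((lm_subset _ _).trans diff_subset)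
        ((lm_subset _ _).trans diff_subset)
  refine ⟨E, fun Q hQ => ⟨measurableSet_lm (hA_meas Q) _, (lm_subset _ _).trans diff_subset,
    hEvol Q hQ⟩, ?_⟩
  intro Q hQ Q' hQ' hne
  rcases le_total Q'.k Q.k with h | h
  · exact hdisj_aux Q hQ Q' hQ' h hne
  · exact (hdisj_aux Q' hQ' Q hQ h (Ne.symm hne)).symm

lemma isCarleson_of_isSparse (hη₀ : 0 < eta) (hS : IsSparse eta S) :
    IsCarleson (1/eta) S := by
  obtain ⟨E, hE, hdisj⟩ := hS
  intro Q
  have hmeas : ∀ P : {P : DyadicInterval // P ∈ S ∧ P.toSet ⊆ Q.toSet},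
      MeasurableSet (E P.1) := fun P => (hE P.1 P.2.1).1
  have hpair : Pairwise (Function.onFun Disjoint
      fun P : {P : DyadicInterval // P ∈ S ∧ P.toSet ⊆ Q.toSet} => E P.1) := by
    intro P P' hne
    exact hdisj P.2.1 P'.2.1 (fun h => hne (Subtype.ext h))
  have key : ENNReal.ofReal eta *
      ∑' P : {P : DyadicInterval // P ∈ S ∧ P.toSet ⊆ Q.toSet}, volume P.1.toSet
      ≤ volume Q.toSet := by
    rw [← ENNReal.tsum_mul_left]
    calc ∑' P : {P : DyadicInterval // P ∈ S ∧ P.toSet ⊆ Q.toSet},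
          ENNReal.ofReal eta * volume P.1.toSet
        ≤ ∑' P : {P : DyadicInterval // P ∈ S ∧ P.toSet ⊆ Q.toSet}, volume (E P.1) :=
          ENNReal.tsum_le_tsum fun P => (hE P.1 P.2.1).2.2
      _ = volume (⋃ P : {P : DyadicInterval // P ∈ S ∧ P.toSet ⊆ Q.toSet}, E P.1) :=
          (measure_iUnion hpair hmeas).symm
      _ ≤ volume Q.toSet :=
          measure_mono (iUnion_subset fun P => (hE P.1 P.2.1).2.1.trans P.2.2)
  calc ∑' P : {P : DyadicInterval // P ∈ S ∧ P.toSet ⊆ Q.toSet}, volume P.1.toSet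
      = ENNReal.ofReal (1/eta) * (ENNReal.ofReal eta *
          ∑' P : {P : DyadicInterval // P ∈ S ∧ P.toSet ⊆ Q.toSet}, volume P.1.toSet) := by
        rw [← mul_assoc, ← ENNReal.ofReal_mul (by positivity), one_div_mul_cancel hη₀.ne',
          ENNReal.ofReal_one, one_mul]
    _ ≤ ENNReal.ofReal (1/eta) * volume Q.toSet := mul_le_mul_right key _

end SparseAux


/-- A collection of dyadic intervals is `η`-sparse iff it is `1/η`-Carleson. -/
theorem sparse_iff_carleson {η : ℝ} (hη₀ : 0 < η) (hη₁ : η < 1)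
    (S : Set DyadicInterval) :
    IsSparse η S ↔ IsCarleson (1 / η) S :=
  ⟨SparseAux.isCarleson_of_isSparse hη₀, SparseAux.isSparse_of_isCarleson hη₀⟩
end

section
/- Let 0 < s < ∞, C > 0, Q₀ a dyadic interval, and f locally s-integrable. The union of all maximal dyadic intervals Q ⊆ Q₀ satisfying ((1/|Q|)∫|f|^s χ̃_Q^M dx)^{1/s} > C·((1/|Q₀|)∫|f|^s χ̃_{Q₀}^{M-1} dx)^{1/s} has total measure at most C' C^{-s} |Q₀|, where C' depends only on s and M. In particular, choosing C large enough, this union has measure at most |Q₀|/2. -/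
open MeasureTheory Set
open scoped ENNReal NNReal

/-- The `L^∞`-adapted bump `χ̃_I(x) = (1 + dist(x,I)/|I|)^{-100}`. -/
noncomputable def chiI (I : DyadicInterval) (x : ℝ) : ℝ :=
  (1 + Metric.infDist x I.toSet / (2 : ℝ) ^ I.k) ^ (-(100 : ℝ))

/-- The weighted `L^s` average `((1/|I|) ∫ |f|^s χ̃_I^m dx)^{1/s}`. -/
noncomputable def ave (I : DyadicInterval) (m : ℕ) (s : ℝ) (f : ℝ → ℝ) : ℝ≥0∞ :=
  ((volume I.toSet)⁻¹ *
    ∫⁻ x, (ENNReal.ofReal |f x|) ^ s * ENNReal.ofReal (chiI I x ^ m)) ^ (1 / s)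

/-- The stopping condition: `Q ⊆ Q₀` and the `L^s` average of `f` over `Q` (with bump
`χ̃_Q^M`) exceeds `C` times the one over `Q₀` (with bump `χ̃_{Q₀}^{M-1}`). -/
def stopCond (s : ℝ) (M : ℕ) (C : ℝ) (Q₀ : DyadicInterval) (f : ℝ → ℝ)
    (Q : DyadicInterval) : Prop :=
  Q.toSet ⊆ Q₀.toSet ∧
    ENNReal.ofReal C * ave Q₀ (M - 1) s f < ave Q M s f

/-- `Q` is a maximal dyadic interval satisfying the stopping condition. -/
def selected (s : ℝ) (M : ℕ) (C : ℝ) (Q₀ : DyadicInterval) (f : ℝ → ℝ)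
    (Q : DyadicInterval) : Prop :=
  stopCond s M C Q₀ f Q ∧
    ∀ Q' : DyadicInterval, stopCond s M C Q₀ f Q' → Q.toSet ⊆ Q'.toSet → Q' = Q


namespace Aux

instance : Countable DyadicInterval :=
  Function.Injective.countable (f := fun I : DyadicInterval => (I.k, I.n))
    (fun ⟨a,b⟩ ⟨c,d⟩ h => by simpa using h)

lemma two_zpow_pos (k : ℤ) : (0:ℝ) < 2 ^ k := zpow_pos (by norm_num) k

lemma toSet_nonempty (I : DyadicInterval) : I.toSet.Nonempty := by
  refine ⟨(I.n:ℝ) * 2 ^ I.k, le_refl _, ?_⟩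
  nlinarith [two_zpow_pos I.k]

lemma measurableSet_toSet (I : DyadicInterval) : MeasurableSet I.toSet :=
  measurableSet_Ico

lemma volume_toSet (I : DyadicInterval) : volume I.toSet = ENNReal.ofReal ((2:ℝ) ^ I.k) := by
  rw [DyadicInterval.toSet, Real.volume_Ico]
  congr 1; ring

lemma volume_toSet_pos (I : DyadicInterval) : 0 < volume I.toSet := by
  rw [volume_toSet]; exact ENNReal.ofReal_pos.2 (two_zpow_pos I.k)

lemma volume_toSet_ne_top (I : DyadicInterval) : volume I.toSet ≠ ∞ := by
  rw [volume_toSet]; exact ENNReal.ofReal_ne_top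

/-- nesting -/
lemma subset_of_mem_mem {I J : DyadicInterval} (hk : I.k ≤ J.k) {x : ℝ}
    (hI : x ∈ I.toSet) (hJ : x ∈ J.toSet) : I.toSet ⊆ J.toSet := by
  obtain ⟨hI1, hI2⟩ := hI
  obtain ⟨hJ1, hJ2⟩ := hJ
  set ℓ : ℝ := 2 ^ I.k with hℓ
  have hℓpos : (0:ℝ) < ℓ := two_zpow_pos I.k
  set d : ℕ := (J.k - I.k).toNat with hd
  have hkd : J.k = I.k + d := by omega
  have hL : (2:ℝ) ^ J.k = 2 ^ d * ℓ := by
    rw [hkd, zpow_add₀ (by norm_num : (2:ℝ) ≠ 0)]; rw [zpow_natCast]; ring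
  have hdpos : (0:ℝ) < 2 ^ d := by positivity
  have hint1 : J.n * 2 ^ d ≤ I.n := by
    by_contra hc
    push_neg at hc
    have hge : I.n + 1 ≤ J.n * 2 ^ d := by omega
    have h3 : ((I.n:ℝ) + 1) ≤ (J.n:ℝ) * 2 ^ d := by exact_mod_cast hge
    have hlt : (J.n : ℝ) * (2 ^ d * ℓ) < ((I.n:ℝ) + 1) * ℓ := by
      calc (J.n : ℝ) * (2 ^ d * ℓ) = J.n * 2 ^ J.k := by rw [hL]
      _ ≤ x := hJ1
      _ < _ := hI2
    nlinarith
  have hint2 : I.n + 1 ≤ (J.n + 1) * 2 ^ d := by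
    by_contra hc
    push_neg at hc
    have hge : (J.n + 1) * 2 ^ d ≤ I.n := by omega
    have h3 : ((J.n:ℝ) + 1) * 2 ^ d ≤ (I.n:ℝ) := by exact_mod_cast hge
    have hlt : (I.n : ℝ) * ℓ < ((J.n:ℝ) + 1) * (2 ^ d * ℓ) := by
      calc (I.n : ℝ) * ℓ ≤ x := hI1
      _ < ((J.n:ℝ)+1) * 2 ^ J.k := hJ2
      _ = ((J.n:ℝ) + 1) * (2 ^ d * ℓ) := by rw [hL]
    nlinarith
  have hr1 : (J.n:ℝ) * 2 ^ d ≤ (I.n:ℝ) := by exact_mod_cast hint1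
  have hr2 : ((I.n:ℝ) + 1) ≤ ((J.n:ℝ) + 1) * 2 ^ d := by exact_mod_cast hint2
  intro y hy
  obtain ⟨hy1, hy2⟩ := hy
  constructor
  · calc (J.n : ℝ) * 2 ^ J.k = (J.n:ℝ) * 2 ^ d * ℓ := by rw [hL]; ring
    _ ≤ I.n * ℓ := by nlinarith
    _ ≤ y := hy1
  · calc y < ((I.n:ℝ) + 1) * ℓ := hy2
    _ ≤ ((J.n:ℝ) + 1) * 2 ^ d * ℓ := by nlinarith
    _ = ((J.n:ℝ) + 1) * 2 ^ J.k := by rw [hL]; ring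

lemma k_le_of_subset {I J : DyadicInterval} (h : I.toSet ⊆ J.toSet) : I.k ≤ J.k := by
  have := measure_mono (μ := volume) h
  rw [volume_toSet, volume_toSet] at this
  have h2 : (2:ℝ) ^ I.k ≤ 2 ^ J.k :=
    (ENNReal.ofReal_le_ofReal_iff (le_of_lt (two_zpow_pos J.k))).1 this
  by_contra hlt
  push_neg at hlt
  exact absurd h2 (not_le.2 (zpow_lt_zpow_right₀ (by norm_num : (1:ℝ) < 2) hlt))

lemma toSet_inj {I J : DyadicInterval} (h : I.toSet = J.toSet) : I = J := by
  have hk : I.k = J.k := le_antisymm (k_le_of_subset h.le) (k_le_of_subset h.ge)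
  have hmemI : (I.n:ℝ) * 2 ^ I.k ∈ J.toSet := by
    rw [← h]; exact ⟨le_refl _, by nlinarith [two_zpow_pos I.k]⟩
  have hmemJ : (J.n:ℝ) * 2 ^ J.k ∈ I.toSet := by
    rw [h]; exact ⟨le_refl _, by nlinarith [two_zpow_pos J.k]⟩
  have h1 : (J.n:ℝ) * 2 ^ J.k ≤ (I.n:ℝ) * 2 ^ I.k := hmemI.1
  have h2 : (I.n:ℝ) * 2 ^ I.k ≤ (J.n:ℝ) * 2 ^ J.k := hmemJ.1
  rw [hk] at h1 h2
  have hn : (I.n:ℝ) = (J.n:ℝ) :=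
    mul_right_cancel₀ (ne_of_gt (two_zpow_pos J.k)) (le_antisymm h2 h1)
  have hn' : I.n = J.n := by exact_mod_cast hn
  cases I; cases J
  simp_all

/-- If two dyadic intervals intersect, the one of smaller scale is contained in the other. -/
lemma subset_or_subset {I J : DyadicInterval} (hx : (I.toSet ∩ J.toSet).Nonempty) :
    I.toSet ⊆ J.toSet ∨ J.toSet ⊆ I.toSet := by
  obtain ⟨x, hI, hJ⟩ := hx
  rcases le_total I.k J.k with hk | hk
  · exact Or.inl (subset_of_mem_mem hk hI hJ)
  · exact Or.inr (subset_of_mem_mem hk hJ hI)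


-- new stuff
lemma base_pos (I : DyadicInterval) (x : ℝ) :
    (0:ℝ) < 1 + Metric.infDist x I.toSet / (2 : ℝ) ^ I.k := by
  have h1 : 0 ≤ Metric.infDist x I.toSet := Metric.infDist_nonneg
  have h2 := two_zpow_pos I.k
  positivity

lemma chiI_eq (I : DyadicInterval) (x : ℝ) :
    chiI I x = ((1 + Metric.infDist x I.toSet / (2 : ℝ) ^ I.k) ^ (100:ℕ))⁻¹ := by
  rw [chiI, Real.rpow_neg (le_of_lt (base_pos I x))]
  rw [← Real.rpow_natCast]
  norm_num

lemma chiI_pos (I : DyadicInterval) (x : ℝ) : 0 < chiI I x := by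
  rw [chiI_eq]
  exact inv_pos.2 (pow_pos (base_pos I x) _)

lemma chiI_le_one (I : DyadicInterval) (x : ℝ) : chiI I x ≤ 1 := by
  rw [chiI_eq]
  rw [inv_le_one_iff₀]
  right
  apply one_le_pow₀
  have h1 : 0 ≤ Metric.infDist x I.toSet := Metric.infDist_nonneg
  have h2 := two_zpow_pos I.k
  have : 0 ≤ Metric.infDist x I.toSet / (2 : ℝ) ^ I.k := by positivity
  linarith

lemma continuous_chiI (I : DyadicInterval) : Continuous (chiI I) := by
  have : Continuous fun x => ((1 + Metric.infDist x I.toSet / (2 : ℝ) ^ I.k) ^ (100:ℕ))⁻¹ := by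
    apply Continuous.inv₀
    · exact ((continuous_const.add ((Metric.continuous_infDist_pt I.toSet).div_const _)).pow _)
    · intro x
      exact ne_of_gt (pow_pos (base_pos I x) _)
  simpa [funext fun x => chiI_eq I x] using this

lemma chiI_mono {Q Q₀ : DyadicInterval} (h : Q.toSet ⊆ Q₀.toSet) (x : ℝ) :
    chiI Q x ≤ chiI Q₀ x := by
  rw [chiI_eq, chiI_eq]
  have hk : Q.k ≤ Q₀.k := k_le_of_subset h
  have hd : Metric.infDist x Q₀.toSet ≤ Metric.infDist x Q.toSet :=
    Metric.infDist_le_infDist_of_subset h (toSet_nonempty Q)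
  have hd0 : 0 ≤ Metric.infDist x Q₀.toSet := Metric.infDist_nonneg
  have hℓ : (2:ℝ) ^ Q.k ≤ 2 ^ Q₀.k := by
    apply zpow_le_zpow_right₀ (by norm_num) hk
  have hℓp := two_zpow_pos Q.k
  have hℓp0 := two_zpow_pos Q₀.k
  have hdiv : Metric.infDist x Q₀.toSet / (2:ℝ) ^ Q₀.k ≤
      Metric.infDist x Q.toSet / (2:ℝ) ^ Q.k := by
    exact div_le_div₀ Metric.infDist_nonneg hd hℓp hℓ
  apply inv_anti₀ (pow_pos (base_pos Q₀ x) _)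
  apply pow_le_pow_left₀ (le_of_lt (base_pos Q₀ x))
  linarith

/-- decay of chiI -/
lemma chiI_le_of_far {I : DyadicInterval} {x : ℝ} {j : ℕ}
    (h : (2:ℝ)^j ≤ 1 + Metric.infDist x I.toSet / (2 : ℝ) ^ I.k) :
    chiI I x ≤ ((2:ℝ) ^ (100 * j))⁻¹ := by
  rw [chiI_eq]
  have h2 : ((2:ℝ)^j) ^ (100:ℕ) ≤ (1 + Metric.infDist x I.toSet / (2 : ℝ) ^ I.k) ^ (100:ℕ) :=
    pow_le_pow_left₀ (by positivity) h _
  have h3 : ((2:ℝ)^j) ^ (100:ℕ) = 2 ^ (100 * j) := by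
    rw [← pow_mul, mul_comm]
  calc ((1 + Metric.infDist x I.toSet / (2 : ℝ) ^ I.k) ^ (100:ℕ))⁻¹
      ≤ (((2:ℝ)^j) ^ (100:ℕ))⁻¹ := by
        apply inv_anti₀ (by positivity) h2
    _ = ((2:ℝ) ^ (100 * j))⁻¹ := by rw [h3]


def ancestor (Q : DyadicInterval) (j : ℕ) : DyadicInterval := ⟨Q.k + (j+1 : ℕ), Q.n / 2 ^ (j+1)⟩

def shf (P : DyadicInterval) (i : ℤ) : DyadicInterval := ⟨P.k, P.n + i⟩

def triple (P : DyadicInterval) : Set ℝ := (shf P (-1)).toSet ∪ P.toSet ∪ (shf P 1).toSet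

lemma ediv_bounds (n : ℤ) (t : ℤ) (ht : 0 < t) : n / t * t ≤ n ∧ n < (n / t + 1) * t := by
  have h1 := Int.mul_ediv_add_emod n t
  have h2 := Int.emod_nonneg n (ne_of_gt ht)
  have h3 := Int.emod_lt_of_pos n ht
  constructor <;> nlinarith

lemma zpow_ancestor (Q : DyadicInterval) (j : ℕ) :
    (2:ℝ) ^ (Q.k + (j+1:ℕ) : ℤ) = 2 ^ (j+1) * 2 ^ Q.k := by
  rw [zpow_add₀ (by norm_num : (2:ℝ) ≠ 0)]
  rw [zpow_natCast]; ring

lemma subset_ancestor (Q : DyadicInterval) (j : ℕ) : Q.toSet ⊆ (ancestor Q j).toSet := by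
  obtain ⟨hlo, hhi⟩ := ediv_bounds Q.n (2 ^ (j+1)) (by positivity)
  set m : ℤ := Q.n / 2 ^ (j+1) with hm
  have hℓp := two_zpow_pos Q.k
  have hr1 : (m:ℝ) * 2 ^ (j+1) ≤ Q.n := by exact_mod_cast hlo
  have hr2 : (Q.n:ℝ) + 1 ≤ (m+1) * 2 ^ (j+1) := by
    have : Q.n + 1 ≤ (m+1) * 2 ^ (j+1) := by omega
    exact_mod_cast this
  intro y hy
  obtain ⟨hy1, hy2⟩ := hy
  constructor
  · show (m:ℝ) * 2 ^ (Q.k + (j+1:ℕ) : ℤ) ≤ y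
    rw [zpow_ancestor]
    nlinarith
  · show y < ((m:ℝ) + 1) * 2 ^ (Q.k + (j+1:ℕ) : ℤ)
    rw [zpow_ancestor]
    nlinarith

lemma left_ge_of_subset {I J : DyadicInterval} (h : I.toSet ⊆ J.toSet) :
    (J.n:ℝ) * 2 ^ J.k ≤ (I.n:ℝ) * 2 ^ I.k :=
  (h ⟨le_refl _, by nlinarith [two_zpow_pos I.k]⟩).1

lemma left_lt_of_subset {I J : DyadicInterval} (h : I.toSet ⊆ J.toSet) :
    (I.n:ℝ) * 2 ^ I.k < ((J.n:ℝ) + 1) * 2 ^ J.k :=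
  (h ⟨le_refl _, by nlinarith [two_zpow_pos I.k]⟩).2

lemma right_le_of_subset {I J : DyadicInterval} (h : I.toSet ⊆ J.toSet) :
    ((I.n:ℝ) + 1) * 2 ^ I.k ≤ ((J.n:ℝ) + 1) * 2 ^ J.k := by
  by_contra hc
  push_neg at hc
  set a : ℝ := (I.n:ℝ) * 2 ^ I.k
  set b : ℝ := ((I.n:ℝ) + 1) * 2 ^ I.k
  set B : ℝ := ((J.n:ℝ) + 1) * 2 ^ J.k
  have hab : a < b := by
    have := two_zpow_pos I.k
    simp only [a, b]
    nlinarith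
  have haB : a < B := left_lt_of_subset h
  set y : ℝ := (max a B + b) / 2
  have hy1 : a ≤ y := by
    have h1 : a ≤ max a B := le_max_left _ _
    simp only [y]; linarith
  have hy2 : y < b := by
    have : max a B < b := max_lt hab hc
    simp only [y]; linarith
  have hyB : B < y := by
    have h1 : B ≤ max a B := le_max_right _ _
    have : max a B < b := max_lt hab hc
    simp only [y]; linarith
  have := (h ⟨hy1, hy2⟩).2
  exact absurd this (not_lt.2 (le_of_lt hyB))

/-- absorption: a shift of a subinterval is inside the triple of the superinterval -/
lemma shf_subset_triple {R R' : DyadicInterval} (h : R.toSet ⊆ R'.toSet) {i : ℤ}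
    (hi : |i| ≤ 1) : (shf R i).toSet ⊆ triple R' := by
  have hk : R.k ≤ R'.k := k_le_of_subset h
  have hℓ : (2:ℝ) ^ R.k ≤ 2 ^ R'.k := zpow_le_zpow_right₀ (by norm_num) hk
  have hℓp := two_zpow_pos R.k
  have hℓp' := two_zpow_pos R'.k
  have h1 : (R'.n:ℝ) * 2 ^ R'.k ≤ R.n * 2 ^ R.k := left_ge_of_subset h
  have h2 : ((R.n:ℝ) + 1) * 2 ^ R.k ≤ ((R'.n:ℝ) + 1) * 2 ^ R'.k := right_le_of_subset h
  have hir : |(i:ℝ)| ≤ 1 := by exact_mod_cast hi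
  have hi1 : (-1:ℝ) ≤ i := (abs_le.1 hir).1
  have hi2 : (i:ℝ) ≤ 1 := (abs_le.1 hir).2
  intro y hy
  obtain ⟨hy1, hy2⟩ := hy
  simp only [shf, DyadicInterval.toSet] at hy1 hy2
  push_cast at hy1 hy2
  have hlo : ((R'.n:ℝ) - 1) * 2 ^ R'.k ≤ y := by nlinarith
  have hhi : y < ((R'.n:ℝ) + 2) * 2 ^ R'.k := by nlinarith
  rcases lt_or_ge y ((R'.n:ℝ) * 2 ^ R'.k) with hc1 | hc1
  · left; left
    simp only [shf, DyadicInterval.toSet, mem_Ico]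
    push_cast
    constructor
    · nlinarith
    · nlinarith
  · rcases lt_or_ge y (((R'.n:ℝ) + 1) * 2 ^ R'.k) with hc2 | hc2
    · left; right; exact ⟨hc1, hc2⟩
    · right
      simp only [shf, DyadicInterval.toSet, mem_Ico]
      push_cast
      constructor
      · linarith
      · nlinarith


lemma cover (Q : DyadicInterval) (j : ℕ) (x : ℝ)
    (hx : Metric.infDist x Q.toSet ≤ ((2:ℝ)^(j+1) - 1) * 2 ^ Q.k) :
    x ∈ triple (ancestor Q j) := by
  have hℓp := two_zpow_pos Q.k
  set ℓ : ℝ := 2 ^ Q.k with hℓdef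
  have hlt : Metric.infDist x Q.toSet < ((2:ℝ)^(j+1) - 1) * ℓ + ℓ/2 :=
    lt_of_le_of_lt hx (by linarith)
  obtain ⟨y, hy, hd⟩ := (Metric.infDist_lt_iff (toSet_nonempty Q)).1 hlt
  obtain ⟨hy1, hy2⟩ := hy
  rw [Real.dist_eq, abs_lt] at hd
  obtain ⟨hd1, hd2⟩ := hd
  obtain ⟨hlo, hhi⟩ := ediv_bounds Q.n (2 ^ (j+1)) (by positivity)
  set m : ℤ := Q.n / 2 ^ (j + 1) with hm
  have hr1 : (m:ℝ) * 2 ^ (j+1) ≤ Q.n := by exact_mod_cast hlo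
  have hr2 : (Q.n:ℝ) + 1 ≤ ((m:ℝ)+1) * 2 ^ (j+1) := by
    have : Q.n + 1 ≤ (m+1) * 2 ^ (j+1) := by omega
    exact_mod_cast this
  have hp2 : (0:ℝ) < 2 ^ (j+1) := by positivity
  have hy1' : (m:ℝ) * 2 ^ (j+1) * ℓ ≤ (Q.n:ℝ) * ℓ := by nlinarith
  have hy2' : ((Q.n:ℝ) + 1) * ℓ ≤ ((m:ℝ)+1) * 2 ^ (j+1) * ℓ := by nlinarith
  have hxlo : ((m:ℝ) - 1) * (2^(j+1) * ℓ) < x := by nlinarith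
  have hxhi : x < ((m:ℝ) + 2) * (2^(j+1) * ℓ) := by nlinarith
  rcases lt_or_ge x ((m:ℝ) * (2^(j+1) * ℓ)) with hc1 | hc1
  · left; left
    simp only [shf, DyadicInterval.toSet, mem_Ico, ancestor]
    rw [zpow_ancestor]
    push_cast
    constructor
    · nlinarith
    · nlinarith
  · rcases lt_or_ge x (((m:ℝ) + 1) * (2^(j+1) * ℓ)) with hc2 | hc2
    · left; right
      simp only [DyadicInterval.toSet, mem_Ico, ancestor]
      rw [zpow_ancestor]
      exact ⟨hc1, hc2⟩
    · right
      simp only [shf, DyadicInterval.toSet, mem_Ico, ancestor]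
      rw [zpow_ancestor]
      push_cast
      constructor
      · nlinarith
      · nlinarith


end Aux

namespace Aux
def Bset (Q : DyadicInterval) (j : ℕ) : Set ℝ :=
  {x | Metric.infDist x Q.toSet ≤ ((2:ℝ)^(j+1) - 1) * 2 ^ Q.k}

lemma measurableSet_Bset (Q : DyadicInterval) (j : ℕ) : MeasurableSet (Bset Q j) :=
  measurableSet_le (Metric.continuous_infDist_pt Q.toSet).measurable measurable_const

noncomputable def cj (j : ℕ) : ℝ≥0∞ := ((2:ℝ≥0∞) ^ (100*j))⁻¹

lemma cj_ne_top (j : ℕ) : cj j ≠ ∞ := by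
  simp [cj]

lemma cj_ne_zero (j : ℕ) : cj j ≠ 0 := by
  simp [cj]

/-- pointwise domination of the bump by a series of indicators -/
lemma chiI_le_tsum (Q : DyadicInterval) (x : ℝ) :
    ENNReal.ofReal (chiI Q x) ≤ ∑' j : ℕ, (Bset Q j).indicator (fun _ => cj j) x := by
  classical
  have hℓp := two_zpow_pos Q.k
  have hd0 : 0 ≤ Metric.infDist x Q.toSet := Metric.infDist_nonneg
  have hex : ∃ j : ℕ, x ∈ Bset Q j := by
    obtain ⟨N, hN⟩ := exists_nat_gt (Metric.infDist x Q.toSet / 2 ^ Q.k)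
    refine ⟨N, ?_⟩
    show Metric.infDist x Q.toSet ≤ ((2:ℝ)^(N+1) - 1) * 2 ^ Q.k
    have h1 : (N:ℝ) + 1 ≤ (2:ℝ)^(N+1) := by
      have h2 : ((N:ℝ)) + 1 ≤ 2^N := by exact_mod_cast (Nat.lt_two_pow_self : N < 2^N)
      have h3 : (2:ℝ)^(N+1) = 2 * 2^N := by ring
      have h4 : (0:ℝ) < 2^N := by positivity
      linarith
    have h4 : Metric.infDist x Q.toSet < N * 2 ^ Q.k := by
      rw [div_lt_iff₀ hℓp] at hN; linarith [hN]
    nlinarith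
  set j₀ := Nat.find hex with hj₀
  have hmem : x ∈ Bset Q j₀ := Nat.find_spec hex
  have hbound : ENNReal.ofReal (chiI Q x) ≤ cj j₀ := by
    rcases Nat.eq_zero_or_pos j₀ with h0 | hpos
    · rw [h0]
      simp only [cj, Nat.mul_zero, pow_zero, inv_one]
      exact ENNReal.ofReal_le_one.2 (chiI_le_one Q x)
    · have hnot : ¬ x ∈ Bset Q (j₀ - 1) := Nat.find_min hex (by omega)
      have hfar : (2:ℝ)^j₀ ≤ 1 + Metric.infDist x Q.toSet / 2 ^ Q.k := by
        simp only [Bset, mem_setOf_eq, not_le] at hnot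
        have : ((2:ℝ)^(j₀ - 1 + 1) - 1) * 2 ^ Q.k < Metric.infDist x Q.toSet := hnot
        have hj : j₀ - 1 + 1 = j₀ := by omega
        rw [hj] at this
        have h5 : (2:ℝ)^j₀ - 1 < Metric.infDist x Q.toSet / 2 ^ Q.k := by
          rw [lt_div_iff₀ hℓp]; linarith
        linarith
      have := chiI_le_of_far hfar
      calc ENNReal.ofReal (chiI Q x) ≤ ENNReal.ofReal (((2:ℝ) ^ (100 * j₀))⁻¹) :=
        ENNReal.ofReal_le_ofReal this
      _ = cj j₀ := by
        rw [ENNReal.ofReal_inv_of_pos (by positivity)]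
        congr 1
        rw [← ENNReal.ofReal_ofNat 2, ← ENNReal.ofReal_pow (by norm_num)]
  calc ENNReal.ofReal (chiI Q x) ≤ cj j₀ := hbound
  _ = (Bset Q j₀).indicator (fun _ => cj j₀) x := by rw [indicator_of_mem hmem]
  _ ≤ ∑' j : ℕ, (Bset Q j).indicator (fun _ => cj j) x := ENNReal.le_tsum j₀

end Aux
namespace Aux

noncomputable def gfun (s : ℝ) (M : ℕ) (Q₀ : DyadicInterval) (f : ℝ → ℝ) (x : ℝ) : ℝ≥0∞ :=
  (ENNReal.ofReal |f x|) ^ s * ENNReal.ofReal (chiI Q₀ x ^ (M-1))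

lemma measurable_gfun (s : ℝ) (M : ℕ) (Q₀ : DyadicInterval) {f : ℝ → ℝ} (hf : Measurable f) :
    Measurable (gfun s M Q₀ f) := by
  apply Measurable.mul
  · exact (hf.abs.ennreal_ofReal).pow_const s
  · exact (((continuous_chiI Q₀).pow (M-1)).measurable).ennreal_ofReal

lemma shf_zero (P : DyadicInterval) : shf P 0 = P := by cases P; simp [shf]

lemma shf_shf (P : DyadicInterval) (i : ℤ) : shf (shf P i) (-i) = P := by
  cases P; simp [shf]

lemma lintegral_le_tsum (s : ℝ) (M : ℕ) (hM : 1 ≤ M) (Q₀ : DyadicInterval) {f : ℝ → ℝ}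
    (hf : Measurable f) {Q : DyadicInterval} (hQ : Q.toSet ⊆ Q₀.toSet) :
    ∫⁻ x, (ENNReal.ofReal |f x|) ^ s * ENNReal.ofReal (chiI Q x ^ M)
      ≤ ∑' j : ℕ, cj j * ∫⁻ x in triple (ancestor Q j), gfun s M Q₀ f x := by
  have hg := measurable_gfun s M Q₀ hf
  have step1 : ∀ x, (ENNReal.ofReal |f x|) ^ s * ENNReal.ofReal (chiI Q x ^ M)
      ≤ ENNReal.ofReal (chiI Q x) * gfun s M Q₀ f x := by
    intro x
    have hc : chiI Q x ^ M ≤ chiI Q x * chiI Q₀ x ^ (M-1) := by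
      have h1 : chiI Q x ^ M = chiI Q x * chiI Q x ^ (M-1) := by
        conv_lhs => rw [show M = (M-1) + 1 by omega]
        rw [pow_succ]; ring
      rw [h1]
      have h2 : chiI Q x ^ (M-1) ≤ chiI Q₀ x ^ (M-1) :=
        pow_le_pow_left₀ (le_of_lt (chiI_pos Q x)) (chiI_mono hQ x) _
      nlinarith [chiI_pos Q x]
    calc (ENNReal.ofReal |f x|) ^ s * ENNReal.ofReal (chiI Q x ^ M)
        ≤ (ENNReal.ofReal |f x|) ^ s * ENNReal.ofReal (chiI Q x * chiI Q₀ x ^ (M-1)) := by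
          exact mul_le_mul_right (ENNReal.ofReal_le_ofReal hc) _
      _ = ENNReal.ofReal (chiI Q x) * gfun s M Q₀ f x := by
          rw [ENNReal.ofReal_mul (le_of_lt (chiI_pos Q x)), gfun]; ring
  have step2 : ∀ x, ENNReal.ofReal (chiI Q x) * gfun s M Q₀ f x
      ≤ ∑' j : ℕ, (Bset Q j).indicator (fun y => cj j * gfun s M Q₀ f y) x := by
    intro x
    have h1 : ENNReal.ofReal (chiI Q x) * gfun s M Q₀ f x
        ≤ (∑' j : ℕ, (Bset Q j).indicator (fun _ => cj j) x) * gfun s M Q₀ f x :=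
      mul_le_mul_left (chiI_le_tsum Q x) _
    rw [← ENNReal.tsum_mul_right] at h1
    refine h1.trans (le_of_eq (tsum_congr fun j => ?_))
    by_cases hx : x ∈ Bset Q j <;> simp [hx]
  calc ∫⁻ x, (ENNReal.ofReal |f x|) ^ s * ENNReal.ofReal (chiI Q x ^ M)
      ≤ ∫⁻ x, ∑' j : ℕ, (Bset Q j).indicator (fun y => cj j * gfun s M Q₀ f y) x :=
        lintegral_mono fun x => (step1 x).trans (step2 x)
    _ = ∑' j : ℕ, ∫⁻ x, (Bset Q j).indicator (fun y => cj j * gfun s M Q₀ f y) x :=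
        lintegral_tsum fun j => ((hg.const_mul (cj j)).indicator (measurableSet_Bset Q j)).aemeasurable
    _ ≤ ∑' j : ℕ, cj j * ∫⁻ x in triple (ancestor Q j), gfun s M Q₀ f x := by
        refine ENNReal.tsum_le_tsum fun j => ?_
        rw [lintegral_indicator (measurableSet_Bset Q j),
          lintegral_const_mul (cj j) hg]
        refine mul_le_mul_right ?_ _
        refine lintegral_mono_set ?_
        intro x hx
        exact cover Q j x hx

lemma triple_lintegral_le (g : ℝ → ℝ≥0∞) (P : DyadicInterval) :
    ∫⁻ x in triple P, g x ≤ (∫⁻ x in (shf P (-1)).toSet, g x) + (∫⁻ x in (shf P 0).toSet, g x)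
      + (∫⁻ x in (shf P 1).toSet, g x) := by
  rw [shf_zero]
  calc ∫⁻ x in triple P, g x
      ≤ (∫⁻ x in (shf P (-1)).toSet ∪ P.toSet, g x) + (∫⁻ x in (shf P 1).toSet, g x) :=
        lintegral_union_le _ _ _
    _ ≤ ((∫⁻ x in (shf P (-1)).toSet, g x) + (∫⁻ x in P.toSet, g x))
        + (∫⁻ x in (shf P 1).toSet, g x) := add_le_add_left (lintegral_union_le _ _ _) _

lemma tsum_w_eq_one : ∑' j : ℕ, ((2:ℝ≥0∞)⁻¹) ^ (j+1) = 1 := by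
  have h1 : ∀ j : ℕ, ((2:ℝ≥0∞)⁻¹) ^ (j+1) = ((2:ℝ≥0∞)⁻¹) ^ j * 2⁻¹ := fun j => pow_succ _ _
  rw [tsum_congr h1, ENNReal.tsum_mul_right, ENNReal.tsum_geometric, ENNReal.one_sub_inv_two,
    inv_inv]
  exact ENNReal.mul_inv_cancel (by norm_num) (by norm_num)

lemma scalar_ineq (j : ℕ) :
    (2:ℝ≥0∞) ^ (j+1) ≤ 4 * (2 ^ (100*j) * ((2:ℝ≥0∞)⁻¹) ^ (j+1)) := by
  have h2 : ((2:ℝ≥0∞)⁻¹) ^ (j+1) = ((2:ℝ≥0∞) ^ (j+1))⁻¹ := by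
    rw [ENNReal.inv_pow]
  have e : (2:ℝ≥0∞)^(100*j) = (2^(99*j) * 2⁻¹) * 2^(j+1) := by
    rw [pow_succ,
      show (2:ℝ≥0∞)^(99*j) * 2⁻¹ * (2^j * 2) = 2^(99*j) * 2^j * (2⁻¹ * 2) by ring,
      ENNReal.inv_mul_cancel (by norm_num) (by norm_num), mul_one, ← pow_add]
    ring_nf
  have key : (2:ℝ≥0∞)^(100*j) * ((2:ℝ≥0∞) ^ (j+1))⁻¹ = 2^(99*j) * 2⁻¹ := by
    rw [e, mul_assoc,
      ENNReal.mul_inv_cancel (by positivity) (ENNReal.pow_ne_top (by norm_num)), mul_one]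
  rw [h2, key]
  have h4 : (4:ℝ≥0∞) * (2^(99*j) * 2⁻¹) = 2 * 2^(99*j) := by
    rw [show (4:ℝ≥0∞) = 2 * 2 by norm_num,
      show (2:ℝ≥0∞) * 2 * (2^(99*j) * 2⁻¹) = 2 * 2^(99*j) * (2 * 2⁻¹) by ring,
      ENNReal.mul_inv_cancel (by norm_num) (by norm_num), mul_one]
  rw [h4, pow_succ]
  calc (2:ℝ≥0∞) ^ j * 2 ≤ 2^(99*j) * 2 :=
        mul_le_mul_left (pow_le_pow_right₀ (by norm_num) (by omega)) _
  _ = 2 * 2^(99*j) := by ring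

end Aux
namespace Aux

lemma volume_shf_ancestor (Q : DyadicInterval) (j : ℕ) (i : ℤ) :
    volume (shf (ancestor Q j) i).toSet = (2:ℝ≥0∞)^(j+1) * volume Q.toSet := by
  rw [volume_toSet, volume_toSet]
  show ENNReal.ofReal ((2:ℝ) ^ (Q.k + (j+1:ℕ) : ℤ)) = _
  rw [zpow_ancestor, ENNReal.ofReal_mul (by positivity), ENNReal.ofReal_pow (by norm_num)]
  norm_num

lemma exists_heavy (s : ℝ) (M : ℕ) (hM : 1 ≤ M) (Q₀ : DyadicInterval) {f : ℝ → ℝ}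
    (hf : Measurable f) (lam : ℝ≥0∞) {Q : DyadicInterval} (hQsub : Q.toSet ⊆ Q₀.toSet)
    (hstop : volume Q.toSet * lam
      < ∫⁻ x, (ENNReal.ofReal |f x|) ^ s * ENNReal.ofReal (chiI Q x ^ M)) :
    ∃ R : DyadicInterval,
      (lam * volume R.toSet ≤ 12 * ∫⁻ x in R.toSet, gfun s M Q₀ f x) ∧ Q.toSet ⊆ triple R := by
  set g := gfun s M Q₀ f with hg
  set X := volume Q.toSet * lam with hX
  have h1 : X < ∑' j : ℕ, cj j * ∫⁻ x in triple (ancestor Q j), g x :=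
    lt_of_lt_of_le hstop (lintegral_le_tsum s M hM Q₀ hf hQsub)
  have h2 : ∃ j : ℕ, ((2:ℝ≥0∞)⁻¹)^(j+1) * X < cj j * ∫⁻ x in triple (ancestor Q j), g x := by
    by_contra hcon
    push_neg at hcon
    have : (∑' j : ℕ, cj j * ∫⁻ x in triple (ancestor Q j), g x) ≤ X := by
      calc (∑' j : ℕ, cj j * ∫⁻ x in triple (ancestor Q j), g x)
          ≤ ∑' j : ℕ, ((2:ℝ≥0∞)⁻¹)^(j+1) * X := ENNReal.tsum_le_tsum hcon
        _ = (∑' j : ℕ, ((2:ℝ≥0∞)⁻¹)^(j+1)) * X := ENNReal.tsum_mul_right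
        _ = X := by rw [tsum_w_eq_one, one_mul]
    exact absurd h1 (not_lt.2 this)
  obtain ⟨j, hj⟩ := h2
  set P := ancestor Q j with hP
  set b : ℤ → ℝ≥0∞ := fun i => ∫⁻ x in (shf P i).toSet, g x with hb
  set m := max (b (-1)) (max (b 0) (b 1)) with hm
  have hT : (∫⁻ x in triple P, g x) ≤ 3 * m := by
    calc (∫⁻ x in triple P, g x) ≤ b (-1) + b 0 + b 1 := triple_lintegral_le g P
    _ ≤ m + m + m := add_le_add (add_le_add (le_max_left _ _)
        ((le_max_left _ _).trans (le_max_right _ _)))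
        ((le_max_right _ _).trans (le_max_right _ _))
    _ = 3 * m := by ring
  obtain ⟨i, hi, hbi⟩ : ∃ i : ℤ, |i| ≤ 1 ∧ m = b i := by
    rcases max_choice (b (-1)) (max (b 0) (b 1)) with h | h
    · exact ⟨-1, by norm_num, h⟩
    · rcases max_choice (b 0) (b 1) with h' | h'
      · exact ⟨0, by norm_num, h.trans h'⟩
      · exact ⟨1, by norm_num, h.trans h'⟩
  refine ⟨shf P i, ?_, ?_⟩
  · -- heaviness
    have h12 : (2:ℝ≥0∞)^(100*j) * (((2:ℝ≥0∞)⁻¹)^(j+1) * X) ≤ 3 * m := by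
      have hcj : (2:ℝ≥0∞)^(100*j) * cj j = 1 :=
        ENNReal.mul_inv_cancel (by positivity) (ENNReal.pow_ne_top (by norm_num))
      calc (2:ℝ≥0∞)^(100*j) * (((2:ℝ≥0∞)⁻¹)^(j+1) * X)
          ≤ (2:ℝ≥0∞)^(100*j) * (cj j * ∫⁻ x in triple P, g x) :=
            mul_le_mul_right (le_of_lt hj) _
        _ = ((2:ℝ≥0∞)^(100*j) * cj j) * ∫⁻ x in triple P, g x := by ring
        _ = ∫⁻ x in triple P, g x := by rw [hcj, one_mul]
        _ ≤ 3 * m := hT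
    calc lam * volume (shf P i).toSet = (2:ℝ≥0∞)^(j+1) * X := by
          rw [hP, volume_shf_ancestor, hX]; ring
      _ ≤ 4 * ((2:ℝ≥0∞)^(100*j) * ((2:ℝ≥0∞)⁻¹)^(j+1)) * X :=
          mul_le_mul_left (scalar_ineq j) _
      _ = 4 * ((2:ℝ≥0∞)^(100*j) * (((2:ℝ≥0∞)⁻¹)^(j+1) * X)) := by ring
      _ ≤ 4 * (3 * m) := mul_le_mul_right h12 _
      _ = 12 * b i := by rw [← hbi]; ring
  · -- Q ⊆ triple (shf P i)
    have h1 : Q.toSet ⊆ P.toSet := subset_ancestor Q j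
    have h2 : P.toSet ⊆ triple (shf P i) := by
      have := shf_subset_triple (le_refl (shf P i).toSet) (i := -i) (by rwa [abs_neg])
      rwa [shf_shf] at this
    exact h1.trans h2

set_option maxHeartbeats 400000 in
/-- maximal heavy interval containing a given heavy interval -/
lemma exists_maxHeavy (g : ℝ → ℝ≥0∞) (lam : ℝ≥0∞) (hlam0 : lam ≠ 0) (hlamtop : lam ≠ ∞)
    (hG : (∫⁻ x, g x) ≠ ∞)
    {R : DyadicInterval} (hR : lam * volume R.toSet ≤ 12 * ∫⁻ x in R.toSet, g x) :
    ∃ R' : DyadicInterval, (lam * volume R'.toSet ≤ 12 * ∫⁻ x in R'.toSet, g x) ∧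
      R.toSet ⊆ R'.toSet ∧
      ∀ R'' : DyadicInterval, (lam * volume R''.toSet ≤ 12 * ∫⁻ x in R''.toSet, g x) →
        R'.toSet ⊆ R''.toSet → R'' = R' := by
  set D : ℝ≥0∞ := (12 * ∫⁻ x, g x) / lam with hD
  have hDtop : D ≠ ∞ := by
    rw [hD]
    intro h
    rw [ENNReal.div_eq_top] at h
    rcases h with ⟨_, h2⟩ | ⟨h1, _⟩
    · exact hlam0 h2
    · exact (ENNReal.mul_ne_top (by norm_num) hG) h1
  have hbd : ∀ R'' : DyadicInterval, (lam * volume R''.toSet ≤ 12 * ∫⁻ x in R''.toSet, g x) →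
      (2:ℝ) ^ R''.k ≤ D.toReal := by
    intro R'' h
    have h1 : lam * volume R''.toSet ≤ 12 * ∫⁻ x, g x :=
      h.trans (mul_le_mul_right (MeasureTheory.setLIntegral_le_lintegral _ _) _)
    have h2 : volume R''.toSet ≤ D := by
      rw [hD]
      rw [ENNReal.le_div_iff_mul_le (Or.inl hlam0) (Or.inl hlamtop)]
      calc volume R''.toSet * lam = lam * volume R''.toSet := by ring
      _ ≤ _ := h1
    rw [volume_toSet] at h2
    exact (ENNReal.ofReal_le_iff_le_toReal hDtop).1 h2
  obtain ⟨N, hN⟩ := pow_unbounded_of_one_lt (D.toReal) (by norm_num : (1:ℝ) < 2)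
  have hbd' : ∀ R'' : DyadicInterval, (lam * volume R''.toSet ≤ 12 * ∫⁻ x in R''.toSet, g x) →
      R''.k ≤ (N:ℤ) := by
    intro R'' h
    by_contra hc
    push_neg at hc
    have h1 : (2:ℝ)^(N:ℤ) ≤ 2 ^ R''.k := zpow_le_zpow_right₀ (by norm_num) (le_of_lt hc)
    rw [zpow_natCast] at h1
    linarith [hbd R'' h]
  have hbdd : ∃ b : ℤ, ∀ z : ℤ, (∃ R' : DyadicInterval, R'.k = z ∧
      (lam * volume R'.toSet ≤ 12 * ∫⁻ x in R'.toSet, g x) ∧ R.toSet ⊆ R'.toSet) → z ≤ b := by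
    refine ⟨(N:ℤ), ?_⟩
    rintro z ⟨R', hk, hh, -⟩
    rw [← hk]
    exact hbd' R' hh
  obtain ⟨κ, ⟨Rm, hRmk, hRmh, hRmsub⟩, hgreat⟩ :=
    Int.exists_greatest_of_bdd hbdd ⟨R.k, R, rfl, hR, subset_refl _⟩
  refine ⟨Rm, hRmh, hRmsub, ?_⟩
  intro R'' h'' hsub''
  have hk1 : Rm.k ≤ R''.k := k_le_of_subset hsub''
  have hk2 : R''.k ≤ κ := hgreat R''.k ⟨R'', rfl, h'', hRmsub.trans hsub''⟩
  have hkeq : R''.k = Rm.k := by omega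
  obtain ⟨x, hx⟩ := toSet_nonempty Rm
  have hsub3 : R''.toSet ⊆ Rm.toSet :=
    subset_of_mem_mem (le_of_eq hkeq) (hsub'' hx) hx
  exact toSet_inj (le_antisymm hsub3 hsub'')

end Aux
namespace Aux

lemma integrand_le_gfun (s : ℝ) (M : ℕ) (hM : 1 ≤ M) (Q₀ : DyadicInterval) (f : ℝ → ℝ)
    {Q : DyadicInterval} (hQ : Q.toSet ⊆ Q₀.toSet) (x : ℝ) :
    (ENNReal.ofReal |f x|) ^ s * ENNReal.ofReal (chiI Q x ^ M) ≤ gfun s M Q₀ f x := by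
  have hc : chiI Q x ^ M ≤ chiI Q₀ x ^ (M-1) := by
    have h1 : chiI Q x ^ M = chiI Q x * chiI Q x ^ (M-1) := by
      conv_lhs => rw [show M = (M-1) + 1 by omega]
      rw [pow_succ]; ring
    rw [h1]
    have h2 : chiI Q x ^ (M-1) ≤ chiI Q₀ x ^ (M-1) :=
      pow_le_pow_left₀ (le_of_lt (chiI_pos Q x)) (chiI_mono hQ x) _
    have h3 := chiI_le_one Q x
    have h4 := chiI_pos Q x
    nlinarith [pow_pos (chiI_pos Q x) (M-1), pow_nonneg (le_of_lt (chiI_pos Q x)) (M-1)]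
  exact mul_le_mul_right (ENNReal.ofReal_le_ofReal hc) _

lemma volume_triple_le (P : DyadicInterval) : volume (triple P) ≤ 3 * volume P.toSet := by
  have hv : ∀ i : ℤ, volume (shf P i).toSet = volume P.toSet := fun i => by
    rw [volume_toSet, volume_toSet]; rfl
  calc volume (triple P) ≤ volume ((shf P (-1)).toSet ∪ P.toSet) + volume (shf P 1).toSet :=
        measure_union_le _ _
    _ ≤ volume (shf P (-1)).toSet + volume P.toSet + volume (shf P 1).toSet :=
        add_le_add_left (measure_union_le _ _) _
    _ = 3 * volume P.toSet := by rw [hv, hv]; ring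

end Aux

/-- The union of the maximal dyadic intervals `Q ⊆ Q₀` where the `L^s` average of `f`
jumps above `C` times the average on `Q₀` has measure `≲ C^{-s} |Q₀|`; in particular,
for `C` large enough, measure at most `|Q₀|/2`. -/
theorem measure_of_stopping_intervals (s : ℝ) (hs : 0 < s) (M : ℕ) (hM : 1 ≤ M) :
    (∃ C' : ℝ, 0 < C' ∧
      ∀ C : ℝ, 0 < C → ∀ (Q₀ : DyadicInterval) (f : ℝ → ℝ), Measurable f →
        volume (⋃ Q : DyadicInterval, ⋃ _ : selected s M C Q₀ f Q, Q.toSet)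
          ≤ ENNReal.ofReal (C' * C ^ (-s)) * volume Q₀.toSet) ∧
    (∃ C₀ : ℝ, 0 < C₀ ∧
      ∀ C : ℝ, C₀ ≤ C → ∀ (Q₀ : DyadicInterval) (f : ℝ → ℝ), Measurable f →
        volume (⋃ Q : DyadicInterval, ⋃ _ : selected s M C Q₀ f Q, Q.toSet)
          ≤ volume Q₀.toSet / 2) := by
  have main : ∀ C : ℝ, 0 < C → ∀ (Q₀ : DyadicInterval) (f : ℝ → ℝ), Measurable f →
      volume (⋃ Q : DyadicInterval, ⋃ _ : selected s M C Q₀ f Q, Q.toSet)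
        ≤ ENNReal.ofReal (36 * C ^ (-s)) * volume Q₀.toSet := by
    intro C hC Q₀ f hf
    set g : ℝ → ℝ≥0∞ := Aux.gfun s M Q₀ f with hgdef
    set G : ℝ≥0∞ := ∫⁻ x, g x with hGdef
    set v₀ : ℝ≥0∞ := volume Q₀.toSet with hv₀
    have hv₀0 : v₀ ≠ 0 := (Aux.volume_toSet_pos Q₀).ne'
    have hv₀top : v₀ ≠ ∞ := Aux.volume_toSet_ne_top Q₀
    have have_ave : ave Q₀ (M - 1) s f = (v₀⁻¹ * G) ^ (1/s) := rfl
    by_cases hG0 : G = 0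
    · -- no interval satisfies the stopping condition
      have hno : ∀ Q, ¬ stopCond s M C Q₀ f Q := by
        rintro Q ⟨hsub, hlt⟩
        have hA0 : ave Q₀ (M - 1) s f = 0 := by
          rw [have_ave, hG0, mul_zero, ENNReal.zero_rpow_of_pos (by positivity)]
        rw [hA0, mul_zero] at hlt
        have hIQ : (∫⁻ x, (ENNReal.ofReal |f x|) ^ s * ENNReal.ofReal (chiI Q x ^ M)) = 0 := by
          refine le_antisymm ?_ zero_le
          calc (∫⁻ x, (ENNReal.ofReal |f x|) ^ s * ENNReal.ofReal (chiI Q x ^ M))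
              ≤ ∫⁻ x, g x := lintegral_mono (Aux.integrand_le_gfun s M hM Q₀ f hsub)
            _ = 0 := hG0
        have : ave Q M s f = 0 := by
          rw [ave, hIQ, mul_zero, ENNReal.zero_rpow_of_pos (by positivity)]
        rw [this] at hlt
        exact lt_irrefl _ hlt
      have hempty : (⋃ Q : DyadicInterval, ⋃ _ : selected s M C Q₀ f Q, Q.toSet) = ∅ := by
        ext x
        simp only [mem_iUnion, mem_empty_iff_false, iff_false]
        rintro ⟨Q, hQ, -⟩
        exact hno Q hQ.1
      rw [hempty]
      simp
    · by_cases hGtop : G = ∞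
      · have hno : ∀ Q, ¬ stopCond s M C Q₀ f Q := by
          rintro Q ⟨hsub, hlt⟩
          have hA : ave Q₀ (M - 1) s f = ∞ := by
            rw [have_ave, hGtop, ENNReal.mul_top (ENNReal.inv_ne_zero.2 hv₀top),
              ENNReal.top_rpow_of_pos (by positivity)]
          rw [hA, ENNReal.mul_top (ENNReal.ofReal_pos.2 hC).ne'] at hlt
          exact not_top_lt hlt
        have hempty : (⋃ Q : DyadicInterval, ⋃ _ : selected s M C Q₀ f Q, Q.toSet) = ∅ := by
          ext x
          simp only [mem_iUnion, mem_empty_iff_false, iff_false]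
          rintro ⟨Q, hQ, -⟩
          exact hno Q hQ.1
        rw [hempty]
        simp
      · -- main case
        set lam : ℝ≥0∞ := (ENNReal.ofReal C) ^ s * (v₀⁻¹ * G) with hlamdef
        have hCs0 : (ENNReal.ofReal C) ^ s ≠ 0 :=
          (ENNReal.rpow_pos (ENNReal.ofReal_pos.2 hC) ENNReal.ofReal_ne_top).ne'
        have hCstop : (ENNReal.ofReal C) ^ s ≠ ∞ :=
          ENNReal.rpow_ne_top_of_nonneg hs.le ENNReal.ofReal_ne_top
        have hlam0 : lam ≠ 0 :=
          mul_ne_zero hCs0 (mul_ne_zero (ENNReal.inv_ne_zero.2 hv₀top) hG0)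
        have hlamtop : lam ≠ ∞ :=
          ENNReal.mul_ne_top hCstop (ENNReal.mul_ne_top (ENNReal.inv_ne_top.2 hv₀0) hGtop)
        have hg := Aux.measurable_gfun s M Q₀ hf
        -- heavy predicate
        set heavy : DyadicInterval → Prop :=
          fun R => lam * volume R.toSet ≤ 12 * ∫⁻ x in R.toSet, g x with hheavy
        set maxH : DyadicInterval → Prop :=
          fun R => heavy R ∧ ∀ R'', heavy R'' → R.toSet ⊆ R''.toSet → R'' = R with hmaxH
        -- covering
        have hcover : (⋃ Q : DyadicInterval, ⋃ _ : selected s M C Q₀ f Q, Q.toSet)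
            ⊆ ⋃ R : {R : DyadicInterval // maxH R}, Aux.triple R.1 := by
          rintro x hx
          rw [mem_iUnion] at hx
          obtain ⟨Q, hx⟩ := hx
          rw [mem_iUnion] at hx
          obtain ⟨hsel, hxQ⟩ := hx
          obtain ⟨hsub, hlt⟩ := hsel.1
          -- derive the integral form of the stopping condition
          have hstop : volume Q.toSet * lam
              < ∫⁻ x, (ENNReal.ofReal |f x|) ^ s * ENNReal.ofReal (chiI Q x ^ M) := by
            have h1 : (ENNReal.ofReal C * ave Q₀ (M - 1) s f) ^ s < (ave Q M s f) ^ s :=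
              ENNReal.rpow_lt_rpow hlt hs
            have hLHS : (ENNReal.ofReal C * ave Q₀ (M - 1) s f) ^ s = lam := by
              rw [ENNReal.mul_rpow_of_nonneg _ _ hs.le, have_ave, ← ENNReal.rpow_mul,
                one_div_mul_cancel hs.ne', ENNReal.rpow_one]
            have hRHS : (ave Q M s f) ^ s = (volume Q.toSet)⁻¹ *
                ∫⁻ x, (ENNReal.ofReal |f x|) ^ s * ENNReal.ofReal (chiI Q x ^ M) := by
              rw [ave, ← ENNReal.rpow_mul, one_div_mul_cancel hs.ne', ENNReal.rpow_one]
            rw [hLHS, hRHS] at h1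
            have h2 := (ENNReal.mul_lt_mul_iff_right (Aux.volume_toSet_pos Q).ne'
              (Aux.volume_toSet_ne_top Q)).2 h1
            have h3 : volume Q.toSet * ((volume Q.toSet)⁻¹ *
                ∫⁻ x, (ENNReal.ofReal |f x|) ^ s * ENNReal.ofReal (chiI Q x ^ M))
                = ∫⁻ x, (ENNReal.ofReal |f x|) ^ s * ENNReal.ofReal (chiI Q x ^ M) := by
              rw [← mul_assoc, ENNReal.mul_inv_cancel (Aux.volume_toSet_pos Q).ne'
                (Aux.volume_toSet_ne_top Q), one_mul]
            rwa [h3] at h2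
          obtain ⟨R, hR, hQR⟩ := Aux.exists_heavy s M hM Q₀ hf lam hsub hstop
          obtain ⟨Rm, hRm, hRRm, hmax⟩ :=
            Aux.exists_maxHeavy g lam hlam0 hlamtop hGtop hR
          have htr : Aux.triple R ⊆ Aux.triple Rm := by
            rintro y (hy | hy) 
            · rcases hy with hy | hy
              · exact Aux.shf_subset_triple hRRm (by norm_num) hy
              · have := Aux.shf_subset_triple hRRm (i := 0) (by norm_num)
                rw [Aux.shf_zero] at this
                exact this hy
            · exact Aux.shf_subset_triple hRRm (by norm_num) hy
          rw [mem_iUnion]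
          exact ⟨⟨Rm, hRm, hmax⟩, htr (hQR hxQ)⟩
        -- disjointness of maximal heavy intervals
        have hdisj : Pairwise (Function.onFun Disjoint fun R : {R : DyadicInterval // maxH R} => R.1.toSet) := by
          intro R1 R2 hne
          rw [Function.onFun]
          by_contra hnd
          obtain ⟨x, hx1, hx2⟩ := Set.not_disjoint_iff.1 hnd
          rcases le_total R1.1.k R2.1.k with hk | hk
          · have hsub := Aux.subset_of_mem_mem hk hx1 hx2
            exact hne (Subtype.ext (R1.2.2 R2.1 R2.2.1 hsub)).symm
          · have hsub := Aux.subset_of_mem_mem hk hx2 hx1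
            exact hne (Subtype.ext (R2.2.2 R1.1 R1.2.1 hsub))
        -- measure estimate
        have hmeas : volume (⋃ R : {R : DyadicInterval // maxH R}, Aux.triple R.1)
            ≤ 36 * lam⁻¹ * G := by
          calc volume (⋃ R : {R : DyadicInterval // maxH R}, Aux.triple R.1)
              ≤ ∑' R : {R : DyadicInterval // maxH R}, volume (Aux.triple R.1) :=
                measure_iUnion_le _
            _ ≤ ∑' R : {R : DyadicInterval // maxH R}, 36 * lam⁻¹ * ∫⁻ x in R.1.toSet, g x := by
                refine ENNReal.tsum_le_tsum fun R => ?_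
                calc volume (Aux.triple R.1) ≤ 3 * volume R.1.toSet := Aux.volume_triple_le R.1
                  _ ≤ 3 * (lam⁻¹ * (12 * ∫⁻ x in R.1.toSet, g x)) := by
                      refine mul_le_mul_right ?_ _
                      calc volume R.1.toSet = lam⁻¹ * (lam * volume R.1.toSet) := by
                            rw [← mul_assoc, ENNReal.inv_mul_cancel hlam0 hlamtop, one_mul]
                        _ ≤ lam⁻¹ * (12 * ∫⁻ x in R.1.toSet, g x) :=
                            mul_le_mul_right R.2.1 _
                  _ = 36 * lam⁻¹ * ∫⁻ x in R.1.toSet, g x := by ring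
            _ = 36 * lam⁻¹ * ∑' R : {R : DyadicInterval // maxH R}, ∫⁻ x in R.1.toSet, g x := by
                rw [ENNReal.tsum_mul_left]
            _ ≤ 36 * lam⁻¹ * G := by
                refine mul_le_mul_right ?_ _
                rw [← MeasureTheory.lintegral_iUnion (s := fun R : {R : DyadicInterval // maxH R} => R.1.toSet) (fun R => Aux.measurableSet_toSet R.1) hdisj]
                exact MeasureTheory.setLIntegral_le_lintegral _ _
        -- final computation
        have hfinal : 36 * lam⁻¹ * G = ENNReal.ofReal (36 * C ^ (-s)) * v₀ := by
          have hinv1 : lam⁻¹ = ((ENNReal.ofReal C) ^ s)⁻¹ * (v₀ * G⁻¹) := by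
            rw [hlamdef, ENNReal.mul_inv (Or.inl hCs0) (Or.inl hCstop),
              ENNReal.mul_inv (Or.inl (ENNReal.inv_ne_zero.2 hv₀top))
                (Or.inl (ENNReal.inv_ne_top.2 hv₀0)), inv_inv]
          rw [hinv1]
          have h36 : (36:ℝ≥0∞) * (((ENNReal.ofReal C) ^ s)⁻¹ * (v₀ * G⁻¹)) * G
              = (36 * ((ENNReal.ofReal C) ^ s)⁻¹) * v₀ * (G⁻¹ * G) := by ring
          rw [h36, ENNReal.inv_mul_cancel hG0 hGtop, mul_one]
          congr 1
          rw [← ENNReal.rpow_neg, ENNReal.ofReal_rpow_of_pos hC,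
            ENNReal.ofReal_mul (by norm_num : (0:ℝ) ≤ 36)]
          congr 1
          norm_num
        calc volume (⋃ Q : DyadicInterval, ⋃ _ : selected s M C Q₀ f Q, Q.toSet)
            ≤ volume (⋃ R : {R : DyadicInterval // maxH R}, Aux.triple R.1) :=
              measure_mono hcover
          _ ≤ 36 * lam⁻¹ * G := hmeas
          _ = ENNReal.ofReal (36 * C ^ (-s)) * v₀ := hfinal
  refine ⟨⟨36, by norm_num, main⟩, ⟨(72:ℝ) ^ (1/s), Real.rpow_pos_of_pos (by norm_num) _, ?_⟩⟩
  intro C hCC₀ Q₀ f hf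
  have hC₀pos : (0:ℝ) < (72:ℝ) ^ (1/s) := Real.rpow_pos_of_pos (by norm_num) _
  have hC : 0 < C := lt_of_lt_of_le hC₀pos hCC₀
  have h72 : (72:ℝ) ≤ C ^ s := by
    calc (72:ℝ) = ((72:ℝ) ^ (1/s)) ^ s := by
          rw [← Real.rpow_mul (by norm_num : (0:ℝ) ≤ 72), one_div_mul_cancel hs.ne',
            Real.rpow_one]
    _ ≤ C ^ s := Real.rpow_le_rpow hC₀pos.le hCC₀ hs.le
  have hhalf : 36 * C ^ (-s) ≤ 1/2 := by
    rw [Real.rpow_neg hC.le]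
    have h1 : (0:ℝ) < C ^ s := Real.rpow_pos_of_pos hC s
    rw [div_eq_mul_inv]
    calc (36:ℝ) * (C ^ s)⁻¹ ≤ 36 * 72⁻¹ := by
          refine mul_le_mul_of_nonneg_left ?_ (by norm_num)
          exact inv_anti₀ (by norm_num) h72
      _ ≤ 1 * 2⁻¹ := by norm_num
  calc volume (⋃ Q : DyadicInterval, ⋃ _ : selected s M C Q₀ f Q, Q.toSet)
      ≤ ENNReal.ofReal (36 * C ^ (-s)) * volume Q₀.toSet := main C hC Q₀ f hf
    _ ≤ 2⁻¹ * volume Q₀.toSet := by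
        refine mul_le_mul_left ?_ _
        calc ENNReal.ofReal (36 * C ^ (-s)) ≤ ENNReal.ofReal (1/2) :=
              ENNReal.ofReal_le_ofReal hhalf
          _ = 2⁻¹ := by
              rw [one_div, ENNReal.ofReal_inv_of_pos (by norm_num)]
              norm_num
    _ = volume Q₀.toSet / 2 := by rw [ENNReal.div_eq_inv_mul]
end
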